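/- arXiv:2004.01674 — 10 statements merged into one kernel-verified Lean document; each statement's English description precedes it below -/
import Mathlib

section
/- Every selective ultrafilter is normal: if F is a selective non-principal ultrafilter on ℕ and {A_i}_{i∈ℕ} is a family of sets in F, then there exists B ∈ F such that for all i, j ∈ B, if i < j then j ∈ A_i. -/
open Filter Set

/-- Every selective non-principal ultrafilter on ℕ is normal. -/
theorem selective_implies_normal (F : Ultrafilter ℕ) (hnp : ∀ n : ℕ, {n} ∉ F)
    (hsel : ∀ f : ℕ → ℕ, (∀ i, f ⁻¹' {i} ∉ F) → ∃ B ∈ F, Set.InjOn f B)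
    (A : ℕ → Set ℕ) (hA : ∀ i, A i ∈ F) :
    ∃ B ∈ F, ∀ i ∈ B, ∀ j ∈ B, i < j → j ∈ A i := by
  classical
  -- finite sets are not in F
  have hfinNot : ∀ S : Set ℕ, S.Finite → S ∉ F := by
    intro S hS
    refine Set.Finite.induction_on (motive := fun S _ => S ∉ F) S hS (Filter.empty_notMem (F : Filter ℕ)) ?_
    intro a s _ _ ih hmem
    rw [Set.insert_eq] at hmem
    rcases Ultrafilter.union_mem_iff.mp hmem with h1 | h1
    · exact hnp a h1
    · exact ih h1
  have hcof : ∀ i : ℕ, {m : ℕ | i < m} ∈ F := by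
    intro i
    rcases F.mem_or_compl_mem {m : ℕ | i < m} with hmem | hmem
    · exact hmem
    · exact absurd hmem (hfinNot _ (by
        apply Set.Finite.subset (Set.finite_Iic i)
        intro x hx
        simpa [Set.mem_Iic] using Nat.le_of_not_lt hx))
  set A' : ℕ → Set ℕ := fun i => {m | i < m ∧ ∀ k ≤ i, m ∈ A k} with hA'def
  have hA'mem : ∀ i, A' i ∈ F := by
    intro i
    have h1 : {m : ℕ | i < m} ∩ ⋂ k ∈ Set.Iic i, A k ∈ F := by
      apply Filter.inter_mem (hcof i)
      exact (Filter.biInter_mem (Set.finite_Iic i)).mpr (fun k _ => hA k)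
    refine Filter.mem_of_superset h1 ?_
    rintro m ⟨h2, h3⟩
    exact ⟨h2, fun k hk => Set.mem_iInter₂.mp h3 k hk⟩
  have hex : ∀ x : ℕ, ∃ i, x ∉ A' i := fun x => ⟨x, fun hx => lt_irrefl x hx.1⟩
  set f : ℕ → ℕ := fun x => Nat.find (hex x) with hfdef
  have hfspec : ∀ x, x ∉ A' (f x) := fun x => Nat.find_spec (hex x)
  have hfmin : ∀ x i, i < f x → x ∈ A' i := fun x i hi =>
    not_not.mp (Nat.find_min (hex x) hi)
  have hfib : ∀ i, f ⁻¹' {i} ∉ F := by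
    intro i hi
    have hmem : A' i ∩ f ⁻¹' {i} ∈ F := Filter.inter_mem (hA'mem i) hi
    rcases Filter.nonempty_of_mem hmem with ⟨x, hx1, hx2⟩
    have hfx : f x = i := hx2
    exact hfspec x (hfx ▸ hx1)
  obtain ⟨B₀, hB₀, hinj⟩ := hsel f hfib
  -- for each bound c, only finitely many elements of B₀ have f-value below c
  have hSfin : ∀ c : ℕ, {y | y ∈ B₀ ∧ f y < c}.Finite := by
    intro c
    apply Set.Finite.of_finite_image (f := f) ?_ (hinj.mono (fun y hy => hy.1))
    apply Set.Finite.subset (Set.finite_Iio c)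
    rintro _ ⟨y, ⟨-, hy⟩, rfl⟩
    exact hy
  set g : ℕ → ℕ := fun c => sSup {y | y ∈ B₀ ∧ f y < c} + 1 with hgdef
  have hg : ∀ c, ∀ y ∈ B₀, f y < c → y < g c := by
    intro c y hy hfy
    have hle : y ≤ sSup {y | y ∈ B₀ ∧ f y < c} :=
      le_csSup (hSfin c).bddAbove ⟨hy, hfy⟩
    have hgc : g c = sSup {y | y ∈ B₀ ∧ f y < c} + 1 := rfl
    omega
  set n : ℕ → ℕ := fun k => Nat.rec 0 (fun _ nk => max (nk + 1) (g nk)) k with hndef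
  have hn0 : n 0 = 0 := rfl
  have hnsucc : ∀ k, n (k + 1) = max (n k + 1) (g (n k)) := fun k => rfl
  have hnmono : StrictMono n := strictMono_nat_of_lt_succ (fun k => by
    rw [hnsucc]; omega)
  have hnkey : ∀ k, ∀ y ∈ B₀, n (k + 1) ≤ y → n k ≤ f y := by
    intro k y hy hle
    by_contra hc
    have hlt := hg (n k) y hy (Nat.lt_of_not_le hc)
    rw [hnsucc] at hle; omega
  set h : ℕ → ℕ := fun x => Nat.findGreatest (fun k => n k ≤ x) x with hhdef
  have hh1 : ∀ x, n (h x) ≤ x := by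
    intro x
    have :=  Nat.findGreatest_spec (P := fun k => n k ≤ x) (Nat.zero_le x)
      (by simp [hn0])
    exact this
  have hh2 : ∀ x, x < n (h x + 1) := by
    intro x
    by_contra hc
    push_neg at hc
    have h1 : h x + 1 ≤ x := le_trans hnmono.le_apply hc
    have h2 : h x + 1 ≤ h x := by
      have := Nat.le_findGreatest (P := fun k => n k ≤ x) h1 hc
      simpa only [hhdef] using this
    omega
  have hhmono : ∀ x y, x ≤ y → h x ≤ h y := by
    intro x y hxy
    exact Nat.le_findGreatest (le_trans (le_trans (Nat.findGreatest_le x) hxy) le_rfl)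
      (le_trans (hh1 x) hxy)
  have hhfib : ∀ k, h ⁻¹' {k} ∉ F := by
    intro k hk
    apply hfinNot (h ⁻¹' {k}) ?_ hk
    apply Set.Finite.subset (Set.finite_Iio (n (k + 1)))
    intro x hx
    have hxk : h x = k := hx
    have hlt := hh2 x
    rw [hxk] at hlt
    exact hlt
  obtain ⟨B₁, hB₁, hinj₁⟩ := hsel h hhfib
  have hpar : ∃ P ∈ F, ∀ x ∈ P, ∀ y ∈ P, h x % 2 = h y % 2 := by
    rcases F.mem_or_compl_mem {x | h x % 2 = 0} with hp | hp
    · exact ⟨_, hp, fun x hx y hy => by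
        simp only [Set.mem_setOf_eq] at hx hy; omega⟩
    · refine ⟨_, hp, fun x hx y hy => ?_⟩
      simp only [Set.mem_compl_iff, Set.mem_setOf_eq] at hx hy
      omega
  obtain ⟨P, hP, hPpar⟩ := hpar
  refine ⟨B₀ ∩ B₁ ∩ P, Filter.inter_mem (Filter.inter_mem hB₀ hB₁) hP, ?_⟩
  rintro i ⟨⟨hi0, hi1⟩, hiP⟩ j ⟨⟨hj0, hj1⟩, hjP⟩ hij
  have h1 : h i ≤ h j := hhmono i j (le_of_lt hij)
  have h2 : h i ≠ h j := fun e => (Nat.ne_of_lt hij) (hinj₁ hi1 hj1 e)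
  have h3 : h i + 2 ≤ h j := by
    have := hPpar i hiP j hjP
    omega
  have h4 : n (h i + 1 + 1) ≤ j := by
    have e : h i + 1 + 1 = h i + 2 := rfl
    rw [e]
    exact le_trans (hnmono.monotone h3) (hh1 j)
  have h6 : n (h i + 1) ≤ f j := hnkey (h i + 1) j hj0 h4
  have h7 : i < f j := lt_of_lt_of_le (hh2 i) h6
  exact (hfmin j i h7).2 i le_rfl
end

section
/- Every normal ultrafilter is Ramsey: if F is a non-principal ultrafilter on ℕ such that for every family {A_i}_{i∈ℕ} ⊆ F there is B ∈ F with (i, j ∈ B and i < j) → j ∈ A_i, then for every partition of the 2-element subsets of ℕ into two pieces there exists H ∈ F homogeneous for the partition. -/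
open Filter Set

/-- Every normal non-principal ultrafilter on ℕ is Ramsey: for every
partition of the 2-element subsets of ℕ (encoded as pairs `(i, j)` with `i < j`) into
two pieces there is a big homogeneous set. -/
theorem normal_implies_ramsey (F : Ultrafilter ℕ) (hnp : ∀ n : ℕ, {n} ∉ F)
    (hnorm : ∀ A : ℕ → Set ℕ, (∀ i, A i ∈ F) →
        ∃ B ∈ F, ∀ i ∈ B, ∀ j ∈ B, i < j → j ∈ A i)
    (P : Set (ℕ × ℕ)) :
    ∃ H ∈ F, (∀ i ∈ H, ∀ j ∈ H, i < j → (i, j) ∈ P) ∨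
             (∀ i ∈ H, ∀ j ∈ H, i < j → (i, j) ∉ P) := by
  classical
  set S : Set ℕ := {i | {j | (i, j) ∈ P} ∈ F} with hS
  rcases F.mem_or_compl_mem S with hSF | hSF
  · set A : ℕ → Set ℕ := fun i => if i ∈ S then {j | (i, j) ∈ P} else Set.univ with hA
    have hAF : ∀ i, A i ∈ F := by
      intro i
      by_cases h : i ∈ S
      · simp only [hA, if_pos h]; exact h
      · simp only [hA, if_neg h]; exact univ_mem
    obtain ⟨B, hBF, hB⟩ := hnorm A hAF
    refine ⟨B ∩ S, F.inter_mem hBF hSF, Or.inl ?_⟩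
    intro i hi j hj hij
    have := hB i hi.1 j hj.1 hij
    simp only [hA, if_pos hi.2] at this
    exact this
  · set A : ℕ → Set ℕ := fun i => if i ∈ Sᶜ then {j | (i, j) ∉ P} else Set.univ with hA
    have hAF : ∀ i, A i ∈ F := by
      intro i
      by_cases h : i ∈ Sᶜ
      · have : {j | (i, j) ∈ P} ∉ F := h
        have := (Ultrafilter.compl_mem_iff_notMem).mpr this
        simp only [hA, if_pos h]
        simpa [Set.compl_setOf] using this
      · simp only [hA, if_neg h]; exact univ_mem
    obtain ⟨B, hBF, hB⟩ := hnorm A hAF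
    refine ⟨B ∩ Sᶜ, F.inter_mem hBF hSF, Or.inr ?_⟩
    intro i hi j hj hij
    have := hB i hi.1 j hj.1 hij
    simp only [hA, if_pos hi.2] at this
    exact this
end

section
/- Every Ramsey ultrafilter is selective: if F is a non-principal ultrafilter on ℕ such that every partition of [ℕ]² into two pieces has a homogeneous set in F, then for every partition {S_i}_{i∈ℕ} of ℕ with all S_i ∉ F there exists B ∈ F intersecting each S_i in at most one point. -/
open Filter Set

/-- Every Ramsey non-principal ultrafilter on ℕ is selective: every small
partition of ℕ admits a big set meeting each piece in at most one point. -/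
theorem ramsey_implies_selective (F : Ultrafilter ℕ) (hnp : ∀ n : ℕ, {n} ∉ F)
    (hram : ∀ P : Set (ℕ × ℕ),
        ∃ H ∈ F, (∀ i ∈ H, ∀ j ∈ H, i < j → (i, j) ∈ P) ∨
                 (∀ i ∈ H, ∀ j ∈ H, i < j → (i, j) ∉ P))
    (S : ℕ → Set ℕ) (hne : ∀ i, (S i).Nonempty) (hdisj : Pairwise (Function.onFun Disjoint S))
    (hcov : (⋃ i, S i) = Set.univ) (hsmall : ∀ i, S i ∉ F) :
    ∃ B ∈ F, ∀ i, (B ∩ S i).Subsingleton := by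
  classical
  have hidx : ∀ n : ℕ, ∃ i, n ∈ S i := by
    intro n
    have : n ∈ ⋃ i, S i := hcov ▸ Set.mem_univ n
    exact Set.mem_iUnion.mp this
  choose idx hidxmem using hidx
  have hidx_unique : ∀ n i, n ∈ S i → idx n = i := by
    intro n i hni
    by_contra h
    exact (hdisj h).le_bot ⟨hidxmem n, hni⟩
  obtain ⟨H, hHF, hcase⟩ := hram {p : ℕ × ℕ | idx p.1 = idx p.2}
  have hH2 : ∃ a ∈ H, ∃ b ∈ H, a ≠ b := by
    by_contra h
    push_neg at h
    obtain ⟨a, ha⟩ : H.Nonempty := Ultrafilter.nonempty_of_mem hHF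
    have hsub : H ⊆ {a} := fun x hx => h x hx a ha
    exact hnp a (F.mem_of_superset hHF hsub)
  rcases hcase with hP | hP
  · exfalso
    obtain ⟨a, ha, b, hb, hab⟩ := hH2
    have hsame : ∀ x ∈ H, idx x = idx a := by
      intro x hx
      rcases lt_trichotomy x a with h | h | h
      · exact hP x hx a ha h
      · rw [h]
      · exact (hP a ha x hx h).symm
    have hsub : H ⊆ S (idx a) := fun x hx => hsame x hx ▸ hidxmem x
    exact hsmall (idx a) (F.mem_of_superset hHF hsub)
  · refine ⟨H, hHF, fun i x hx y hy => ?_⟩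
    by_contra hxy
    have hix : idx x = i := hidx_unique x i hx.2
    have hiy : idx y = i := hidx_unique y i hy.2
    rcases lt_trichotomy x y with h | h | h
    · exact hP x hx.1 y hy.1 h (hix.trans hiy.symm)
    · exact hxy h
    · exact hP y hy.1 x hx.1 h (hiy.trans hix.symm)
end

section
/- An ultrafilter on ℕ is selective if and only if for every partition of [ℕ]² into two pieces there is a homogeneous set belonging to the ultrafilter. -/
open Filter Set

/-- Finite sets do not belong to a non-principal ultrafilter. -/
lemma sir_finite_not_mem_F (F : Ultrafilter ℕ) (hnp : ∀ n : ℕ, {n} ∉ F)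
    (s : Set ℕ) (hs : s.Finite) : s ∉ F := by
  refine Set.Finite.induction_on (motive := fun s _ => s ∉ F) s hs (Filter.empty_notMem (F : Filter ℕ)) ?_
  intro a t _ _ ih
  rw [Set.insert_eq, Ultrafilter.union_mem_iff]
  rintro (h | h)
  · exact hnp a h
  · exact ih h

/-- Cofinite sets belong to a non-principal ultrafilter. -/
lemma sir_cofinite_mem_F (F : Ultrafilter ℕ) (hnp : ∀ n : ℕ, {n} ∉ F)
    (s : Set ℕ) (h : sᶜ.Finite) : s ∈ F := by
  by_contra h'
  exact sir_finite_not_mem_F F hnp sᶜ h ((Ultrafilter.compl_mem_iff_notMem).2 h')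

/-- P-point-like step: from selectivity, a big set almost contained in each
member of a decreasing sequence of big sets. -/
lemma sir_stepA (F : Ultrafilter ℕ)
    (hsel : ∀ f : ℕ → ℕ, (∀ i, f ⁻¹' {i} ∉ F) → ∃ B ∈ F, Set.InjOn f B)
    (D : ℕ → Set ℕ) (hD : ∀ n, D n ∈ F) :
    ∃ B ∈ F, ∀ n, (B \ D n).Finite := by
  classical
  by_cases hE : (⋂ n, D n) ∈ F
  · refine ⟨⋂ n, D n, hE, fun n => ?_⟩
    have : (⋂ m, D m) \ D n = ∅ := by
      ext x; simp only [Set.mem_diff, Set.mem_iInter, Set.mem_empty_iff_false, iff_false,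
        not_and, not_not]
      exact fun h => h n
    rw [this]; exact Set.finite_empty
  · set f : ℕ → ℕ := fun j => if h : ∃ n, j ∉ D n then Nat.find h else 0 with hf
    have hfib : ∀ m, f ⁻¹' {m} ∉ F := by
      intro m
      match m with
      | 0 =>
        intro hmem
        have hsub : f ⁻¹' {0} ⊆ (⋂ n, D n) ∪ (D 0)ᶜ := by
          intro j hj
          simp only [Set.mem_preimage, Set.mem_singleton_iff] at hj
          by_cases hij : ∃ n, j ∉ D n
          · right
            have : Nat.find hij = 0 := by rw [hf] at hj; simpa [hij] using hj
            have := Nat.find_spec hij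
            rwa [‹Nat.find hij = 0›] at this
          · left
            push_neg at hij
            exact Set.mem_iInter.2 hij
        have : (⋂ n, D n) ∪ (D 0)ᶜ ∈ F := F.toFilter.mem_of_superset hmem hsub
        rcases Ultrafilter.union_mem_iff.1 this with h | h
        · exact hE h
        · exact (Ultrafilter.compl_mem_iff_notMem.1 h) (hD 0)
      | m + 1 =>
        intro hmem
        have hsub : f ⁻¹' {m + 1} ⊆ (D (m+1))ᶜ := by
          intro j hj
          simp only [Set.mem_preimage, Set.mem_singleton_iff] at hj
          by_cases hij : ∃ n, j ∉ D n
          · have hfind : Nat.find hij = m + 1 := by rw [hf] at hj; simpa [hij] using hj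
            have := Nat.find_spec hij
            rwa [hfind] at this
          · rw [hf] at hj; simp [hij] at hj
        exact (Ultrafilter.compl_mem_iff_notMem.1
          (F.toFilter.mem_of_superset hmem hsub)) (hD (m+1))
    obtain ⟨B, hB, hinj⟩ := hsel f hfib
    refine ⟨B, hB, fun n => ?_⟩
    have hsub : B \ D n ⊆ ⋃ m ∈ Finset.range (n+1), B ∩ f ⁻¹' {m} := by
      intro j hj
      have hij : ∃ k, j ∉ D k := ⟨n, hj.2⟩
      have hle : f j ≤ n := by
        rw [hf]; simp only [hij, dif_pos]
        exact Nat.find_le hj.2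
      simp only [Set.mem_iUnion, Finset.mem_range]
      exact ⟨f j, Nat.lt_succ_of_le hle, hj.1, rfl⟩
    refine Set.Finite.subset ?_ hsub
    refine Set.Finite.biUnion (Finset.range (n+1)).finite_toSet (fun m _ => ?_)
    refine Set.Subsingleton.finite ?_
    intro x hx y hy
    exact hinj hx.1 hy.1 (hx.2.trans hy.2.symm)

/-- Q-point-like step: from a big set almost contained in all the `D n`,
produce a big set which diagonalizes the sequence. -/
lemma sir_diagF (F : Ultrafilter ℕ) (hnp : ∀ n : ℕ, {n} ∉ F)
    (hsel : ∀ f : ℕ → ℕ, (∀ i, f ⁻¹' {i} ∉ F) → ∃ B ∈ F, Set.InjOn f B)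
    (D : ℕ → Set ℕ)
    (B : Set ℕ) (hB : B ∈ F) (hBfin : ∀ n, (B \ D n).Finite) :
    ∃ B' ∈ F, ∀ i ∈ B', ∀ j ∈ B', i < j → j ∈ D i := by
  classical
  have hb : ∀ n, ∃ N, ∀ x ∈ B \ D n, x < N := by
    intro n
    obtain ⟨N, hN⟩ := (hBfin n).bddAbove
    exact ⟨N + 1, fun x hx => Nat.lt_succ_of_le (hN hx)⟩
  choose h hh using hb
  have hkey : ∀ n, ∀ j ∈ B, h n ≤ j → j ∈ D n := by
    intro n j hj hle
    by_contra hnd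
    exact absurd hle (not_le.2 (hh n j ⟨hj, hnd⟩))
  set nseq : ℕ → ℕ := fun k =>
    Nat.rec 0 (fun _ ih => max (ih + 1) ((Finset.range (ih + 1)).sup h)) k with hnseq
  have hstep : ∀ k, nseq (k+1) = max (nseq k + 1) ((Finset.range (nseq k + 1)).sup h) :=
    fun k => rfl
  have hsm : StrictMono nseq := strictMono_nat_of_lt_succ (fun k => by
    rw [hstep]; exact lt_of_lt_of_le (Nat.lt_succ_self _) (le_max_left _ _))
  have hle_apply : ∀ k, k ≤ nseq k := fun k => hsm.le_apply
  have hsup : ∀ k i, i ≤ nseq k → h i ≤ nseq (k+1) := by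
    intro k i hi
    rw [hstep]
    exact le_trans (Finset.le_sup (Finset.mem_range.2 (Nat.lt_succ_of_le hi))) (le_max_right _ _)
  set idx : ℕ → ℕ := fun j => Nat.findGreatest (fun k => nseq k ≤ j) j with hidx
  have hidx_le : ∀ j, nseq (idx j) ≤ j := by
    intro j
    exact Nat.findGreatest_spec (P := fun k => nseq k ≤ j) (Nat.zero_le j) (by simp [hnseq])
  have hidx_lt : ∀ j, j < nseq (idx j + 1) := by
    intro j
    by_contra hc
    push_neg at hc
    have h1 : idx j + 1 ≤ j := le_trans (hle_apply _) hc
    have h2 : idx j + 1 ≤ idx j := Nat.le_findGreatest (P := fun k => nseq k ≤ j) h1 hc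
    omega
  have hidx_mono : ∀ i j, i ≤ j → idx i ≤ idx j := by
    intro i j hij
    exact Nat.le_findGreatest (le_trans (le_trans (hle_apply _) (hidx_le i)) hij)
      (le_trans (hidx_le i) hij)
  have hfinfib : ∀ (g : ℕ → ℕ), (∀ j, idx j ≤ 2 * g j + 1) → ∀ m, g ⁻¹' {m} ∉ F := by
    intro g hg m
    have hsub : g ⁻¹' {m} ⊆ Set.Iio (nseq (2 * m + 2)) := by
      intro j hj
      simp only [Set.mem_preimage, Set.mem_singleton_iff] at hj
      have h1 : idx j ≤ 2 * m + 1 := by rw [← hj]; exact hg j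
      exact lt_of_lt_of_le (hidx_lt j) (hsm.monotone (show idx j + 1 ≤ 2 * m + 2 by omega))
    intro hmem
    exact sir_finite_not_mem_F F hnp _ (Set.finite_Iio _)
      (F.toFilter.mem_of_superset hmem hsub)
  obtain ⟨B₁, hB₁, hinj₁⟩ := hsel (fun j => idx j / 2)
    (hfinfib _ (fun j => by omega))
  obtain ⟨B₂, hB₂, hinj₂⟩ := hsel (fun j => (idx j + 1) / 2)
    (hfinfib _ (fun j => by omega))
  refine ⟨B ∩ (B₁ ∩ B₂), Filter.inter_mem hB (Filter.inter_mem hB₁ hB₂), ?_⟩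
  rintro i ⟨hiB, hiB₁, hiB₂⟩ j ⟨hjB, hjB₁, hjB₂⟩ hij
  set a := idx i with ha
  set b := idx j with hbd
  have hab : a ≤ b := hidx_mono i j hij.le
  have h1 : a / 2 ≠ b / 2 := by
    intro heq
    exact absurd (hinj₁ hiB₁ hjB₁ heq) hij.ne
  have h2 : (a + 1) / 2 ≠ (b + 1) / 2 := by
    intro heq
    exact absurd (hinj₂ hiB₂ hjB₂ heq) hij.ne
  have hab2 : a + 2 ≤ b := by omega
  have hia : i ≤ nseq (a + 1) := (hidx_lt i).le
  have : h i ≤ nseq (a + 2) := hsup (a + 1) i hia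
  have hhij : h i ≤ j := le_trans this (le_trans (hsm.monotone hab2) (hidx_le j))
  exact hkey i j hjB hhij

/-- A selective ultrafilter diagonalizes any decreasing sequence of big sets. -/
lemma sir_diag (F : Ultrafilter ℕ) (hnp : ∀ n : ℕ, {n} ∉ F)
    (hsel : ∀ f : ℕ → ℕ, (∀ i, f ⁻¹' {i} ∉ F) → ∃ B ∈ F, Set.InjOn f B)
    (D : ℕ → Set ℕ) (hD : ∀ n, D n ∈ F) :
    ∃ B ∈ F, ∀ i ∈ B, ∀ j ∈ B, i < j → j ∈ D i := by
  obtain ⟨B, hB, hBfin⟩ := sir_stepA F hsel D hD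
  exact sir_diagF F hnp hsel D B hB hBfin

/-- A non-principal ultrafilter on ℕ is selective if and only if every
partition of the 2-element subsets of ℕ into two pieces has a big homogeneous set. -/
theorem selective_iff_ramsey (F : Ultrafilter ℕ) (hnp : ∀ n : ℕ, {n} ∉ F) :
    (∀ f : ℕ → ℕ, (∀ i, f ⁻¹' {i} ∉ F) → ∃ B ∈ F, Set.InjOn f B) ↔
    (∀ P : Set (ℕ × ℕ),
        ∃ H ∈ F, (∀ i ∈ H, ∀ j ∈ H, i < j → (i, j) ∈ P) ∨
                 (∀ i ∈ H, ∀ j ∈ H, i < j → (i, j) ∉ P)) := by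
  classical
  constructor
  · -- selective implies Ramsey
    intro hsel P
    set S : ℕ → Set ℕ := fun i => {j | i < j ∧ (i, j) ∈ P} with hS
    set A : ℕ → Set ℕ := fun i => {j | i < j} ∩ (if S i ∈ F then S i else (S i)ᶜ) with hA
    have hAF : ∀ i, A i ∈ F := by
      intro i
      refine Filter.inter_mem ?_ ?_
      · apply sir_cofinite_mem_F F hnp
        have : {j | i < j}ᶜ = Set.Iic i := by ext x; simp [hS]
        rw [this]; exact Set.finite_Iic i
      · split
        · assumption
        · exact Ultrafilter.compl_mem_iff_notMem.2 (by assumption)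
    set C : Set ℕ := {i | S i ∈ F} with hC
    set C₀ : Set ℕ := if C ∈ F then C else Cᶜ with hC₀
    have hC₀F : C₀ ∈ F := by
      rw [hC₀]; split
      · assumption
      · exact Ultrafilter.compl_mem_iff_notMem.2 (by assumption)
    set D : ℕ → Set ℕ := fun n => C₀ ∩ ⋂ i ∈ Set.Iic n, A i with hD
    have hDF : ∀ n, D n ∈ F := fun n =>
      Filter.inter_mem hC₀F ((Filter.biInter_mem (Set.finite_Iic n)).2 (fun i _ => hAF i))
    obtain ⟨B, hBF, hdiag⟩ := sir_diag F hnp hsel D hDF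
    refine ⟨B ∩ C₀, Filter.inter_mem hBF hC₀F, ?_⟩
    have hmemA : ∀ i ∈ C₀, ∀ j, i < j → j ∈ A i →
        (if C ∈ F then ((i, j) ∈ P) else ((i, j) ∉ P)) := by
      intro i hi j hij hjA
      have hjS := hjA.2
      by_cases hCF : C ∈ F
      · simp only [hCF, if_true]
        have hiC : i ∈ C := by rw [hC₀, if_pos hCF] at hi; exact hi
        have hiC' : S i ∈ F := hiC
        rw [if_pos hiC'] at hjS
        exact hjS.2
      · simp only [hCF, if_false]
        have hiC : i ∉ C := by rw [hC₀, if_neg hCF] at hi; exact hi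
        have hiC' : S i ∉ F := hiC
        rw [if_neg hiC'] at hjS
        intro hP
        exact hjS ⟨hij, hP⟩
    by_cases hCF : C ∈ F
    · left
      rintro i ⟨hiB, hiC₀⟩ j ⟨hjB, _⟩ hij
      have hjD : j ∈ D i := hdiag i hiB j hjB hij
      have hjA : j ∈ A i := by
        have := hjD.2
        simp only [Set.mem_iInter] at this
        exact this i (le_refl i)
      have := hmemA i hiC₀ j hij hjA
      rwa [if_pos hCF] at this
    · right
      rintro i ⟨hiB, hiC₀⟩ j ⟨hjB, _⟩ hij
      have hjD : j ∈ D i := hdiag i hiB j hjB hij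
      have hjA : j ∈ A i := by
        have := hjD.2
        simp only [Set.mem_iInter] at this
        exact this i (le_refl i)
      have := hmemA i hiC₀ j hij hjA
      rwa [if_neg hCF] at this
  · -- Ramsey implies selective
    intro hram f hf
    obtain ⟨H, hHF, hhom | hhom⟩ := hram {p : ℕ × ℕ | f p.1 = f p.2}
    · exfalso
      obtain ⟨x₀, hx₀⟩ := Ultrafilter.nonempty_of_mem hHF
      have hconst : ∀ y ∈ H, f y = f x₀ := by
        intro y hy
        rcases lt_trichotomy y x₀ with h | h | h
        · exact hhom y hy x₀ hx₀ h
        · rw [h]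
        · exact (hhom x₀ hx₀ y hy h).symm
      exact hf (f x₀) (F.toFilter.mem_of_superset hHF hconst)
    · refine ⟨H, hHF, ?_⟩
      intro x hx y hy hxy
      by_contra hne
      rcases lt_or_gt_of_ne hne with h | h
      · exact hhom x hx y hy h hxy
      · exact hhom y hy x hx h hxy.symm
end

section
/- Let F be a selective ultrafilter on ℕ and x ∈ ℚ* a finite or infinitesimal hyperrational represented by (x_n). Then there exists B ∈ F such that the subsequence (x_n)_{n∈B} is a Cauchy sequence in ℚ. -/
open Filter Set

/-- If `F` is selective and the hyperrational represented by `(x_n)` is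
finite or infinitesimal, then some big subsequence of `(x_n)` is Cauchy in ℚ. -/
theorem exists_cauchy_big_subsequence
    (F : Ultrafilter ℕ) (hnp : ∀ n : ℕ, {n} ∉ F)
    (hsel : ∀ f : ℕ → ℕ, (∀ i, f ⁻¹' {i} ∉ F) → ∃ B ∈ F, Set.InjOn f B)
    (x : ℕ → ℚ)
    (hfin : ∃ q : ℚ, |(x : Germ (F : Filter ℕ) ℚ)| ≤ (q : Germ (F : Filter ℕ) ℚ)) :
    ∃ B ∈ F, ∀ e : ℕ → ℕ, StrictMono e → Set.range e = B →
      IsCauSeq abs (fun k => x (e k)) := by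
  classical
  obtain ⟨q, hq⟩ := hfin
  -- translate the germ inequality to an eventual bound
  have econst : ((fun _ => q : ℕ → ℚ) : Germ (F : Filter ℕ) ℚ)
      = (q : Germ (F : Filter ℕ) ℚ) := by
    have h := map_ratCast ((Germ.coeRingHom (F : Filter ℕ)).comp (Pi.constRingHom ℕ ℚ)) q
    rw [Rat.cast_id] at h
    exact h
  have hq' : ∀ᶠ n in (F : Filter ℕ), |x n| ≤ q := by
    rw [Germ.abs_def, Germ.map_coe, ← econst] at hq
    exact Germ.coe_le.mp hq
  -- no finite set belongs to F
  have hfinmem : ∀ s : Set ℕ, s.Finite → s ∉ F := by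
    intro s hs hmem
    obtain ⟨a, _, ha⟩ := Ultrafilter.eq_pure_of_finite_mem hs hmem
    exact hnp a (by rw [ha]; exact rfl)
  -- the F-limit L of x in ℝ
  have hmem : ∀ᶠ n in (F : Filter ℕ), ((x n : ℝ)) ∈ Icc (-(q:ℝ)) (q:ℝ) := by
    filter_upwards [hq'] with n hn
    rw [mem_Icc]
    have := abs_le.mp hn
    constructor <;> [exact_mod_cast this.1; exact_mod_cast this.2]
  have hcpt : IsCompact (Icc (-(q:ℝ)) (q:ℝ)) := isCompact_Icc
  obtain ⟨L, _, hL⟩ := hcpt.ultrafilter_le_nhds (F.map (fun n => (x n : ℝ)))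
    (by rw [Ultrafilter.coe_map, le_principal_iff, mem_map]; exact hmem)
  -- sets where x is within 1/(k+1) of L
  set A : ℕ → Set ℕ := fun k => {n | |((x n : ℝ)) - L| < 1/((k:ℝ)+1)} with hA
  have hAmem : ∀ k, A k ∈ F := by
    intro k
    have hball : Metric.ball L (1/((k:ℝ)+1)) ∈ nhds L :=
      Metric.ball_mem_nhds L (by positivity)
    have := hL hball
    rw [Ultrafilter.coe_map, mem_map] at this
    have hsub : (fun n => (x n : ℝ)) ⁻¹' Metric.ball L (1/((k:ℝ)+1)) ⊆ A k := by
      intro n hn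
      simpa [hA, Real.dist_eq] using hn
    exact F.mem_of_superset this hsub
  have hAanti : ∀ k, A (k+1) ⊆ A k := by
    intro k n hn
    simp only [hA, mem_setOf_eq] at hn ⊢
    refine lt_of_lt_of_le hn ?_
    apply one_div_le_one_div_of_le (by positivity)
    push_cast; linarith
  -- decreasing sets with empty intersection
  set A' : ℕ → Set ℕ := fun k => A k ∩ {n | k < n} with hA'
  have hA'mem : ∀ k, A' k ∈ F := by
    intro k
    refine F.inter_mem (hAmem k) ?_
    have : {n | k < n} = (Set.Iic k)ᶜ := by ext n; simp only [Set.mem_setOf_eq, Set.mem_compl_iff, Set.mem_Iic, not_le]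
    rw [this]
    exact Ultrafilter.compl_mem_iff_notMem.mpr (hfinmem _ (Set.finite_Iic k))
  have hA'anti : ∀ j k, j ≤ k → A' k ⊆ A' j := by
    intro j k hjk
    induction k with
    | zero => rw [Nat.le_zero.mp hjk]
    | succ m ih =>
      rcases Nat.lt_or_ge j (m+1) with h | h
      · intro n hn
        exact ih (Nat.lt_succ_iff.mp h) ⟨hAanti m hn.1, lt_trans (Nat.lt_succ_self m) hn.2⟩
      · rw [le_antisymm hjk h]
  have hA'not : ∀ n, n ∉ A' n := fun n hn => lt_irrefl n hn.2
  -- the least k with n ∉ A' k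
  have hex : ∀ n, ∃ k, n ∉ A' k := fun n => ⟨n, hA'not n⟩
  set f : ℕ → ℕ := fun n => Nat.find (hex n) with hf
  have hfiber : ∀ i, f ⁻¹' {i} ∉ F := by
    intro i hi
    have hsub : f ⁻¹' {i} ⊆ (A' i)ᶜ := by
      intro n hn
      have hfn : f n = i := hn
      have hspec : n ∉ A' (f n) := Nat.find_spec (hex n)
      exact hfn ▸ hspec
    have : (A' i)ᶜ ∈ F := F.mem_of_superset hi hsub
    exact (Ultrafilter.compl_mem_iff_notMem.mp this) (hA'mem i)
  obtain ⟨B, hBF, hBinj⟩ := hsel f hfiber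
  -- B is almost contained in every A' k
  have hBae : ∀ k, (B \ A' k).Finite := by
    intro k
    have hsub : B \ A' k ⊆ B ∩ f ⁻¹' (Set.Iic k) := by
      rintro n ⟨hnB, hnA⟩
      exact ⟨hnB, Nat.find_le hnA⟩
    have himg : (f '' (B ∩ f ⁻¹' Set.Iic k)).Finite :=
      (Set.finite_Iic k).subset (by rintro _ ⟨n, ⟨_, hn⟩, rfl⟩; exact hn)
    exact (Set.Finite.of_finite_image himg (hBinj.mono Set.inter_subset_left)).subset hsub
  refine ⟨B, hBF, ?_⟩
  intro e he hrange ε hε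
  -- choose k with 1/(k+1) < ε/2
  obtain ⟨k, hk⟩ := exists_nat_one_div_lt (show (0:ℝ) < (ε:ℝ)/2 by positivity)
  -- bound the finitely many exceptions
  obtain ⟨M, hM⟩ := (hBae k).bddAbove
  refine ⟨M + 1, fun j hj => ?_⟩
  have hkey : ∀ m, M + 1 ≤ m → e m ∈ A k := by
    intro m hm
    have hmB : e m ∈ B := hrange ▸ Set.mem_range_self m
    by_contra hcon
    have hmem : e m ∈ B \ A' k := ⟨hmB, fun h => hcon h.1⟩
    have := hM hmem
    have hle : m ≤ e m := he.le_apply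
    omega
  have h1 : |((x (e j) : ℝ)) - L| < 1/((k:ℝ)+1) := hkey j hj
  have h2 : |((x (e (M+1)) : ℝ)) - L| < 1/((k:ℝ)+1) := hkey (M+1) le_rfl
  have h3 : |((x (e j) : ℝ)) - ((x (e (M+1)) : ℝ))| < (ε:ℝ) := by
    calc |((x (e j) : ℝ)) - ((x (e (M+1)) : ℝ))|
        ≤ |((x (e j) : ℝ)) - L| + |L - ((x (e (M+1)) : ℝ))| := abs_sub_le _ L _
      _ = |((x (e j) : ℝ)) - L| + |((x (e (M+1)) : ℝ)) - L| := by rw [abs_sub_comm L]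
      _ < 1/((k:ℝ)+1) + 1/((k:ℝ)+1) := by linarith
      _ < (ε:ℝ) := by linarith
  have h4 : |x (e j) - x (e (M+1))| < ε := by exact_mod_cast h3
  simpa using h4
end

section
/- Let F be a selective ultrafilter and x ∈ ℚ* finite or infinitesimal. If (x_n)_{n∈K} and (x_n)_{n∈L} are Cauchy subsequences with K, L ∈ F, then they are equivalent: the difference of the k-th terms tends to 0 as k → ∞. -/
open Filter Set Topology

/-- For `F` selective and `x` finite or infinitesimal, any two big Cauchy
subsequences of a representative are equivalent: their termwise difference tends to 0. -/
theorem cauchy_big_subsequences_equivalent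
    (F : Ultrafilter ℕ) (hnp : ∀ n : ℕ, {n} ∉ F)
    (hsel : ∀ f : ℕ → ℕ, (∀ i, f ⁻¹' {i} ∉ F) → ∃ B ∈ F, Set.InjOn f B)
    (x : ℕ → ℚ)
    (hfin : ∃ q : ℚ, |(x : Germ (F : Filter ℕ) ℚ)| ≤ (q : Germ (F : Filter ℕ) ℚ))
    (K L : Set ℕ) (hK : K ∈ F) (hL : L ∈ F)
    (eK eL : ℕ → ℕ) (heK : StrictMono eK) (hrK : Set.range eK = K)
    (heL : StrictMono eL) (hrL : Set.range eL = L)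
    (hcK : IsCauSeq abs (fun k => x (eK k))) (hcL : IsCauSeq abs (fun k => x (eL k))) :
    Tendsto (fun k => x (eK k) - x (eL k)) atTop (𝓝 (0 : ℚ)) := by
  -- K ∩ L is infinite
  have hKL : (K ∩ L : Set ℕ) ∈ F := F.toFilter.inter_mem hK hL
  have hinf : (K ∩ L).Infinite := by
    intro hfinite
    obtain ⟨a, _, ha⟩ := Ultrafilter.eq_pure_of_finite_mem hfinite hKL
    exact hnp a (by rw [ha]; exact mem_pure.mpr rfl)
  rw [NormedAddCommGroup.tendsto_nhds_zero]
  intro ε hε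
  obtain ⟨δ, hδ0R, hδε⟩ := exists_rat_btwn hε
  have hδ0 : (0 : ℚ) < δ := by exact_mod_cast hδ0R
  have hδ0' : (0 : ℚ) < δ / 4 := by positivity
  obtain ⟨iK, hiK⟩ := hcK (δ / 4) hδ0'
  obtain ⟨iL, hiL⟩ := hcL (δ / 4) hδ0'
  obtain ⟨m, hm, hmgt⟩ := hinf.exists_gt (max (eK iK) (eL iL))
  obtain ⟨a, ha⟩ : ∃ a, eK a = m := by
    have : m ∈ K := hm.1
    rw [← hrK] at this; exact this
  obtain ⟨b, hb⟩ : ∃ b, eL b = m := by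
    have : m ∈ L := hm.2
    rw [← hrL] at this; exact this
  have haK : iK ≤ a := le_of_lt (heK.lt_iff_lt.mp (by
    rw [ha]; exact lt_of_le_of_lt (le_max_left _ _) hmgt))
  have hbL : iL ≤ b := le_of_lt (heL.lt_iff_lt.mp (by
    rw [hb]; exact lt_of_le_of_lt (le_max_right _ _) hmgt))
  rw [eventually_atTop]
  refine ⟨max iK iL, fun k hk => ?_⟩
  have hkK : iK ≤ k := le_trans (le_max_left _ _) hk
  have hkL : iL ≤ k := le_trans (le_max_right _ _) hk
  have h1 := hiK k hkK
  have h2 := hiK a haK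
  have h3 := hiL k hkL
  have h4 := hiL b hbL
  have key : |x (eK k) - x (eL k)| < δ := by
    have hab : x (eK a) = x (eL b) := by rw [ha, hb]
    have : |x (eK k) - x (eL k)| ≤
        |x (eK k) - x (eK iK)| + |x (eK a) - x (eK iK)|
        + |x (eL b) - x (eL iL)| + |x (eL k) - x (eL iL)| := by
      have := abs_sub_abs_le_abs_sub (x (eK k)) (x (eL k))
      calc |x (eK k) - x (eL k)|
          = |(x (eK k) - x (eK iK)) - (x (eK a) - x (eK iK))
            + ((x (eL b) - x (eL iL)) - (x (eL k) - x (eL iL)))| := by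
            rw [hab]; ring_nf
        _ ≤ _ := by
            refine le_trans (abs_add_le _ _) ?_
            have t1 := abs_sub (x (eK k) - x (eK iK)) (x (eK a) - x (eK iK))
            have t2 := abs_sub (x (eL b) - x (eL iL)) (x (eL k) - x (eL iL))
            linarith [abs_sub_comm (x (eL b) - x (eL iL)) (x (eL k) - x (eL iL))]
    linarith
  have : ‖x (eK k) - x (eL k)‖ < (δ : ℝ) := by
    rw [← Rat.norm_cast_real, Real.norm_eq_abs]
    exact_mod_cast key
  exact lt_trans this hδε
end

section
/- In ℚ* over a non-principal ultrafilter F, if x is represented by a strictly increasing sequence on a set in F and also by a strictly decreasing sequence on a set in F, then we have a contradiction; i.e., no element is simultaneously 'left' and 'right': the cases strictly increasing, strictly decreasing, and stationary big subsequences are mutually exclusive. -/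
open Filter Set

/-- An element of `ℚ*` is *left* if some representative is strictly increasing on a big set. -/
def IsLeft (F : Ultrafilter ℕ) (z : Germ (F : Filter ℕ) ℚ) : Prop :=
  ∃ x : ℕ → ℚ, (x : Germ (F : Filter ℕ) ℚ) = z ∧ ∃ B ∈ F, StrictMonoOn x B

/-- An element of `ℚ*` is *right* if some representative is strictly decreasing on a big set. -/
def IsRight (F : Ultrafilter ℕ) (z : Germ (F : Filter ℕ) ℚ) : Prop :=
  ∃ x : ℕ → ℚ, (x : Germ (F : Filter ℕ) ℚ) = z ∧ ∃ B ∈ F, StrictAntiOn x B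

/-- An element of `ℚ*` is *stationary* if some representative is constant on a big set. -/
def IsStationaryQ (F : Ultrafilter ℕ) (z : Germ (F : Filter ℕ) ℚ) : Prop :=
  ∃ x : ℕ → ℚ, (x : Germ (F : Filter ℕ) ℚ) = z ∧
    ∃ B ∈ F, ∀ i ∈ B, ∀ j ∈ B, x i = x j

/-- The cases of a strictly increasing, strictly decreasing, or stationary
big representing subsequence are mutually exclusive. -/
theorem left_right_stationary_mutually_exclusive
    (F : Ultrafilter ℕ) (hnp : ∀ n : ℕ, {n} ∉ F) (z : Germ (F : Filter ℕ) ℚ) :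
    ¬ (IsLeft F z ∧ IsRight F z) ∧ ¬ (IsLeft F z ∧ IsStationaryQ F z) ∧
    ¬ (IsRight F z ∧ IsStationaryQ F z) := by
  have two : ∀ S : Set ℕ, S ∈ F → ∃ i ∈ S, ∃ j ∈ S, i < j := by
    intro S hS
    obtain ⟨i, hi⟩ := Ultrafilter.nonempty_of_mem hS
    have hc : ({i}ᶜ : Set ℕ) ∈ F := Ultrafilter.compl_mem_iff_notMem.2 (hnp i)
    obtain ⟨j, hjS, hji⟩ := Ultrafilter.nonempty_of_mem (F.inter_sets hS hc)
    have hne : j ≠ i := hji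
    rcases hne.lt_or_gt with h | h
    · exact ⟨j, hjS, i, hi, h⟩
    · exact ⟨i, hi, j, hjS, h⟩
  refine ⟨?_, ?_, ?_⟩
  · rintro ⟨⟨x, hx, B, hB, hmono⟩, ⟨y, hy, C, hC, hanti⟩⟩
    have heq : {n | x n = y n} ∈ F := by
      have : (x : Germ (F : Filter ℕ) ℚ) = (y : Germ (F : Filter ℕ) ℚ) := hx.trans hy.symm
      exact Germ.coe_eq.mp this
    obtain ⟨i, hi, j, hj, hij⟩ := two (B ∩ C ∩ {n | x n = y n})
      (F.inter_sets (F.inter_sets hB hC) heq)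
    have h1 : x i < x j := hmono hi.1.1 hj.1.1 hij
    have h2 : y j < y i := hanti hi.1.2 hj.1.2 hij
    rw [hi.2, hj.2] at h1
    exact absurd h1 h2.asymm
  · rintro ⟨⟨x, hx, B, hB, hmono⟩, ⟨y, hy, C, hC, hconst⟩⟩
    have heq : {n | x n = y n} ∈ F := Germ.coe_eq.mp (hx.trans hy.symm)
    obtain ⟨i, hi, j, hj, hij⟩ := two (B ∩ C ∩ {n | x n = y n})
      (F.inter_sets (F.inter_sets hB hC) heq)
    have h1 : x i < x j := hmono hi.1.1 hj.1.1 hij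
    have h2 : y i = y j := hconst i hi.1.2 j hj.1.2
    rw [hi.2, hj.2] at h1
    exact absurd h2 h1.ne
  · rintro ⟨⟨x, hx, B, hB, hanti⟩, ⟨y, hy, C, hC, hconst⟩⟩
    have heq : {n | x n = y n} ∈ F := Germ.coe_eq.mp (hx.trans hy.symm)
    obtain ⟨i, hi, j, hj, hij⟩ := two (B ∩ C ∩ {n | x n = y n})
      (F.inter_sets (F.inter_sets hB hC) heq)
    have h1 : x j < x i := hanti hi.1.1 hj.1.1 hij
    have h2 : y i = y j := hconst i hi.1.2 j hj.1.2
    rw [hi.2, hj.2] at h1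
    exact absurd h2.symm h1.ne
end

section
/- Let F be a selective ultrafilter on ℕ. The map ν : ℚ*_fin → ℝ sending x to the limit of a Cauchy big subsequence of a representative of x is well-defined (independent of choices) and is a surjective ring homomorphism with kernel 𝕀. -/
open Filter Set Topology

/-- For a selective ultrafilter `F`, the value map `ν` on the subring of
finite-or-infinitesimal hyperrationals — sending `x` to the limit of any convergent big
subsequence of any representative — is well defined and is a surjective ring homomorphism
onto ℝ with kernel the ideal of infinitesimals. -/
theorem value_map_exists
    (F : Ultrafilter ℕ) (hnp : ∀ n : ℕ, {n} ∉ F)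
    (hsel : ∀ f : ℕ → ℕ, (∀ i, f ⁻¹' {i} ∉ F) → ∃ B ∈ F, Set.InjOn f B)
    (R : Subring (Germ (F : Filter ℕ) ℚ))
    (hR : (R : Set (Germ (F : Filter ℕ) ℚ)) =
      {x | ∃ q : ℚ, 0 < q ∧ |x| ≤ (q : Germ (F : Filter ℕ) ℚ)}) :
    ∃ ν : R →+* ℝ, Function.Surjective ν ∧
      (∀ x : R, ν x = 0 ↔
        ∀ q : ℚ, 0 < q → |(x : Germ (F : Filter ℕ) ℚ)| < (q : Germ (F : Filter ℕ) ℚ)) ∧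
      (∀ x : R, ∀ rep : ℕ → ℚ, (rep : Germ (F : Filter ℕ) ℚ) = (x : Germ (F : Filter ℕ) ℚ) →
        ∀ B ∈ F, ∀ e : ℕ → ℕ, StrictMono e → Set.range e = B →
        ∀ r : ℝ, Tendsto (fun k => ((rep (e k) : ℝ))) atTop (𝓝 r) → ν x = r) := by
  classical
  have hconst : ∀ q : ℚ, ((q : ℚ) : Germ (F : Filter ℕ) ℚ)
      = ((fun _ => q : ℕ → ℚ) : Germ (F : Filter ℕ) ℚ) :=
    fun q => (map_ratCast ((Germ.coeRingHom (F : Filter ℕ)).comp (Pi.constRingHom ℕ ℚ)) q).symm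
  have habsf : ∀ f : ℕ → ℚ, |(f : Germ (F : Filter ℕ) ℚ)|
      = ((fun n => |f n| : ℕ → ℚ) : Germ (F : Filter ℕ) ℚ) := by
    intro f; rw [Germ.abs_def]; rfl
  have hF_atTop : (F : Filter ℕ) ≤ atTop := by
    rcases F.le_cofinite_or_eq_pure with h | ⟨a, ha⟩
    · exact h.trans_eq Nat.cofinite_eq_atTop
    · exact absurd (by rw [ha]; exact mem_pure.2 rfl) (hnp a)
  -- existence of an F-limit for every element of R
  have hex : ∀ x : R, ∃ r : ℝ,
      Tendsto (fun n => (((x : Germ (F : Filter ℕ) ℚ).out n : ℝ))) F (𝓝 r) := by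
    intro x
    obtain ⟨q, hq, hle⟩ : ∃ q : ℚ, 0 < q ∧
        |(x : Germ (F : Filter ℕ) ℚ)| ≤ (q : Germ (F : Filter ℕ) ℚ) := by
      have hx := x.2
      rw [← SetLike.mem_coe, hR] at hx; exact hx
    set f := (x : Germ (F : Filter ℕ) ℚ).out with hf
    have hfx : (f : Germ (F : Filter ℕ) ℚ) = (x : Germ (F : Filter ℕ) ℚ) := Quotient.out_eq _
    have habs : ∀ᶠ n in (F : Filter ℕ), |f n| ≤ q := by
      rw [← hfx, habsf, hconst, Germ.coe_le] at hle
      exact hle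
    have hmem : Icc (-(q : ℝ)) (q : ℝ) ∈ Ultrafilter.map (fun n => ((f n : ℝ))) F := by
      refine Ultrafilter.mem_map.2 (Filter.mem_of_superset habs ?_)
      intro n hn
      have h1 : |(f n : ℝ)| ≤ (q : ℝ) := by exact_mod_cast (abs_le.2 (abs_le.1 hn))
      exact abs_le.1 h1
    obtain ⟨r, -, hr⟩ := (isCompact_Icc).ultrafilter_le_nhds
      (Ultrafilter.map (fun n => ((f n : ℝ))) F) (le_principal_iff.2 hmem)
    exact ⟨r, hr⟩
  set νf : R → ℝ := fun x => Classical.choose (hex x) with hνf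
  -- any representative tends to νf x along F
  have hrep : ∀ x : R, ∀ f : ℕ → ℚ,
      (f : Germ (F : Filter ℕ) ℚ) = (x : Germ (F : Filter ℕ) ℚ) →
      Tendsto (fun n => ((f n : ℝ))) F (𝓝 (νf x)) := by
    intro x f hf
    have h1 := Classical.choose_spec (hex x)
    have heq : (x : Germ (F : Filter ℕ) ℚ).out =ᶠ[(F : Filter ℕ)] f := by
      rw [← Germ.coe_eq]
      rw [hf]; exact Quotient.out_eq _
    exact h1.congr' (heq.mono fun n h => by rw [h])
  have huniq : ∀ x : R, ∀ f : ℕ → ℚ,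
      (f : Germ (F : Filter ℕ) ℚ) = (x : Germ (F : Filter ℕ) ℚ) →
      ∀ r : ℝ, Tendsto (fun n => ((f n : ℝ))) F (𝓝 r) → νf x = r := by
    intro x f hf r hr
    exact tendsto_nhds_unique (hrep x f hf) hr
  -- ring hom structure
  have hout : ∀ x : R, (((x : Germ (F : Filter ℕ) ℚ).out : ℕ → ℚ) : Germ (F : Filter ℕ) ℚ)
      = (x : Germ (F : Filter ℕ) ℚ) := fun x => Quotient.out_eq _
  refine ⟨{ toFun := νf,
            map_one' := ?_,
            map_mul' := ?_,
            map_zero' := ?_,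
            map_add' := ?_ }, ?_, ?_, ?_⟩
  · exact huniq 1 (fun _ => (1 : ℚ)) rfl 1 (by simpa using tendsto_const_nhds)
  · intro x y
    set fx := (x : Germ (F : Filter ℕ) ℚ).out
    set fy := (y : Germ (F : Filter ℕ) ℚ).out
    have hmul : ((fun n => fx n * fy n : ℕ → ℚ) : Germ (F : Filter ℕ) ℚ)
        = ((x * y : R) : Germ (F : Filter ℕ) ℚ) := by
      have : ((fun n => fx n * fy n : ℕ → ℚ) : Germ (F : Filter ℕ) ℚ)
          = (fx : Germ (F : Filter ℕ) ℚ) * (fy : Germ (F : Filter ℕ) ℚ) := rfl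
      rw [this, hout x, hout y]; rfl
    refine huniq (x * y) _ hmul _ ?_
    have := (hrep x fx (hout x)).mul (hrep y fy (hout y))
    simpa using this
  · exact huniq 0 (fun _ => (0 : ℚ)) rfl 0 (by simpa using tendsto_const_nhds)
  · intro x y
    set fx := (x : Germ (F : Filter ℕ) ℚ).out
    set fy := (y : Germ (F : Filter ℕ) ℚ).out
    have hadd : ((fun n => fx n + fy n : ℕ → ℚ) : Germ (F : Filter ℕ) ℚ)
        = ((x + y : R) : Germ (F : Filter ℕ) ℚ) := by
      have : ((fun n => fx n + fy n : ℕ → ℚ) : Germ (F : Filter ℕ) ℚ)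
          = (fx : Germ (F : Filter ℕ) ℚ) + (fy : Germ (F : Filter ℕ) ℚ) := rfl
      rw [this, hout x, hout y]; rfl
    refine huniq (x + y) _ hadd _ ?_
    have := (hrep x fx (hout x)).add (hrep y fy (hout y))
    simpa using this
  -- surjectivity
  · intro r
    have hrat : ∀ n : ℕ, ∃ p : ℚ, |(p : ℝ) - r| < 1 / (n + 1) := by
      intro n
      have hpos : (0 : ℝ) < 1 / (n + 1) := by positivity
      obtain ⟨p, hp⟩ := exists_rat_near r hpos
      exact ⟨p, by rwa [abs_sub_comm]⟩
    choose rep hrepn using hrat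
    obtain ⟨q, hq⟩ := exists_rat_gt (|r| + 1)
    have hq0 : (0 : ℚ) < q := by
      have : (0 : ℝ) < q := lt_of_le_of_lt (by positivity) hq
      exact_mod_cast this
    have hbd : ∀ n, |rep n| ≤ q := by
      intro n
      have h1 : |(rep n : ℝ)| ≤ |(rep n : ℝ) - r| + |r| := by
        calc |(rep n : ℝ)| = |((rep n : ℝ) - r) + r| := by ring_nf
        _ ≤ |(rep n : ℝ) - r| + |r| := abs_add_le _ _
      have h2 : (1 : ℝ) / (n + 1) ≤ 1 := by
        rw [div_le_one (by positivity)]; linarith [Nat.cast_nonneg (α := ℝ) n]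
      have h3 : |(rep n : ℝ)| ≤ (q : ℝ) := by
        have := hrepn n
        calc |(rep n : ℝ)| ≤ |(rep n : ℝ) - r| + |r| := h1
          _ ≤ 1 + |r| := by linarith
          _ ≤ (q : ℝ) := by linarith
      exact_mod_cast (by push_cast; exact h3 : (|rep n| : ℝ) ≤ (q : ℝ))
    have hmem : (rep : Germ (F : Filter ℕ) ℚ) ∈ R := by
      rw [← SetLike.mem_coe, hR]
      exact ⟨q, hq0, by
        rw [habsf, hconst, Germ.coe_le]
        exact Eventually.of_forall hbd⟩
    have htend : Tendsto (fun n => ((rep n : ℝ))) atTop (𝓝 r) := by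
      rw [tendsto_iff_dist_tendsto_zero]
      refine squeeze_zero (fun n => dist_nonneg) (fun n => ?_)
        tendsto_one_div_add_atTop_nhds_zero_nat
      rw [Real.dist_eq]
      exact le_of_lt (hrepn n)
    refine ⟨⟨(rep : Germ (F : Filter ℕ) ℚ), hmem⟩, ?_⟩
    exact huniq _ rep rfl r (htend.mono_left hF_atTop)
  -- kernel
  · intro x
    constructor
    · intro h0 q hq
      have h := hrep x _ (hout x)
      rw [show νf x = _ from h0] at h
      have hev : ∀ᶠ n in (F : Filter ℕ), |(x : Germ (F : Filter ℕ) ℚ).out n| < q := by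
        have := Metric.tendsto_nhds.mp h (q : ℝ) (by exact_mod_cast hq)
        refine this.mono fun n hn => ?_
        rw [Real.dist_eq, sub_zero] at hn
        exact_mod_cast (by push_cast; exact hn :
          (|(x : Germ (F : Filter ℕ) ℚ).out n| : ℝ) < (q : ℝ))
      rw [← hout x, habsf, hconst]
      exact Germ.coe_lt.2 hev
    · intro h
      refine huniq x _ (hout x) 0 ?_
      rw [Metric.tendsto_nhds]
      intro ε hε
      obtain ⟨q, hq0, hqε⟩ := exists_rat_btwn hε
      have hq0' : (0 : ℚ) < q := by exact_mod_cast hq0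
      have := h q hq0'
      rw [← hout x, habsf, hconst, Germ.coe_lt] at this
      refine this.mono fun n hn => ?_
      rw [Real.dist_eq, sub_zero]
      have : (|(x : Germ (F : Filter ℕ) ℚ).out n| : ℝ) < (q : ℝ) := by exact_mod_cast hn
      push_cast at this
      linarith
  -- compatibility with convergent big subsequences
  · intro x rep hrepeq B hB e he hrange r htend
    refine huniq x rep hrepeq r ?_
    rw [Filter.tendsto_def]
    intro U hU
    have h1 : (fun k => ((rep (e k) : ℝ))) ⁻¹' U ∈ atTop := htend hU
    obtain ⟨K, hK⟩ := eventually_atTop.1 h1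
    have hfin : (e '' (Iio K))ᶜ ∈ (F : Filter ℕ) := by
      apply hF_atTop
      rw [← Nat.cofinite_eq_atTop]
      exact ((finite_Iio K).image e).compl_mem_cofinite
    refine Filter.mem_of_superset (Filter.inter_mem hB hfin) ?_
    rintro n ⟨hnB, hnc⟩
    rw [← hrange] at hnB
    obtain ⟨k, rfl⟩ := hnB
    have hkK : K ≤ k := by
      by_contra hlt
      exact hnc ⟨k, by simpa using Nat.lt_of_not_le hlt, rfl⟩
    exact hK k hkK
end

section
/- Let F be a selective ultrafilter on ℕ. Then the quotient ring ℚ*_fin / 𝕀 is isomorphic as a field to ℝ. -/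
open Filter Set

private lemma germ_ratCast_eq (F : Ultrafilter ℕ) (q : ℚ) :
    (q : Germ (F : Filter ℕ) ℚ) = ((fun _ => q : ℕ → ℚ) : Germ (F : Filter ℕ) ℚ) :=
  RingHom.congr_fun
    (Subsingleton.elim (Rat.castHom (Germ (F : Filter ℕ) ℚ))
      ((Filter.Germ.coeRingHom _).comp (Pi.constRingHom ℕ ℚ))) q

set_option maxHeartbeats 2000000 in
/-- For a selective ultrafilter `F`, the quotient of the ring of
finite-or-infinitesimal hyperrationals by the ideal of infinitesimals is isomorphic
to the field of real numbers. -/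
theorem finite_mod_infinitesimal_iso_real
    (F : Ultrafilter ℕ) (hnp : ∀ n : ℕ, {n} ∉ F)
    (hsel : ∀ f : ℕ → ℕ, (∀ i, f ⁻¹' {i} ∉ F) → ∃ B ∈ F, Set.InjOn f B)
    (R : Subring (Germ (F : Filter ℕ) ℚ))
    (hR : (R : Set (Germ (F : Filter ℕ) ℚ)) =
      {x | ∃ q : ℚ, 0 < q ∧ |x| ≤ (q : Germ (F : Filter ℕ) ℚ)})
    (I : Ideal R)
    (hI : ∀ y : R, y ∈ I ↔
      ∀ q : ℚ, 0 < q → |(y : Germ (F : Filter ℕ) ℚ)| < (q : Germ (F : Filter ℕ) ℚ)) :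
    Nonempty ((R ⧸ I) ≃+* ℝ) := by
  classical
  set G := Germ (F : Filter ℕ) ℚ with hG
  have hbound : ∀ x : R, ∃ q : ℚ, 0 < q ∧ |(x : G)| ≤ (q : G) := by
    intro x
    have hx : (x : G) ∈ (R : Set G) := x.2
    rw [hR] at hx
    exact hx
  set S : R → Set ℝ := fun x => Rat.cast '' {q : ℚ | (q : G) ≤ (x : G)} with hS
  have hSne : ∀ x : R, (S x).Nonempty := by
    intro x
    obtain ⟨B, hB, hxB⟩ := hbound x
    refine ⟨((-B : ℚ) : ℝ), ⟨-B, ?_, rfl⟩⟩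
    have h2 : -(B : G) ≤ (x : G) := le_trans (neg_le_neg hxB) (neg_abs_le (x : G))
    show ((-B : ℚ) : G) ≤ (x : G)
    push_cast
    exact h2
  have hSbdd : ∀ x : R, BddAbove (S x) := by
    intro x
    obtain ⟨B, hB, hxB⟩ := hbound x
    refine ⟨(B : ℝ), ?_⟩
    rintro r ⟨p, hp, rfl⟩
    have h : (p : G) ≤ (B : G) := le_trans hp (le_trans (le_abs_self _) hxB)
    exact_mod_cast (Rat.cast_le (K := G)).mp h
  set st : R → ℝ := fun x => sSup (S x) with hst
  have hmem_le : ∀ (x : R) (q : ℚ), (q : G) ≤ (x : G) → (q : ℝ) ≤ st x := by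
    intro x q h
    exact le_csSup (hSbdd x) ⟨q, h, rfl⟩
  have hle_st : ∀ (x : R) (q : ℚ), (x : G) ≤ (q : G) → st x ≤ (q : ℝ) := by
    intro x q h
    refine csSup_le (hSne x) ?_
    rintro r ⟨p, hp, rfl⟩
    exact_mod_cast (Rat.cast_le (K := G)).mp (le_trans hp h)
  -- approximation lemma
  have happrox : ∀ (x : R) (ε : ℚ), 0 < ε → ∃ q : ℚ,
      (q : G) ≤ (x : G) ∧ (x : G) ≤ ((q + ε : ℚ) : G) ∧
      (q : ℝ) ≤ st x ∧ st x ≤ (q : ℝ) + (ε : ℝ) := by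
    intro x ε hε
    obtain ⟨B, hB, hxB⟩ := hbound x
    have hxu : (x : G) ≤ (B : G) := le_trans (le_abs_self _) hxB
    have hxl : ((-B : ℚ) : G) ≤ (x : G) := by
      push_cast
      exact le_trans (neg_le_neg hxB) (neg_abs_le (x : G))
    set P : ℕ → Prop := fun k => (((-B + k * ε : ℚ)) : G) ≤ (x : G) with hP
    have hP0 : P 0 := by
      show (((-B + (0:ℕ) * ε : ℚ)) : G) ≤ (x : G)
      push_cast
      simpa using hxl
    set N : ℕ := ⌈(2 * B) / ε⌉₊ with hN
    have hNge : (2 * B) / ε ≤ (N : ℚ) := Nat.le_ceil _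
    have hbig : ∀ m : ℕ, N < m → ¬ P m := by
      intro m hm hPm
      have h1 : ((-B + m * ε : ℚ) : G) ≤ (B : G) := le_trans hPm hxu
      have h2 : (-B + m * ε : ℚ) ≤ B := (Rat.cast_le (K := G)).mp h1
      have h3 : (m : ℚ) * ε ≤ 2 * B := by linarith
      have h4 : (2 * B) / ε < (m : ℚ) := lt_of_le_of_lt hNge (by exact_mod_cast hm)
      have h5 : 2 * B < (m : ℚ) * ε := by
        rw [div_lt_iff₀ hε] at h4
        linarith
      linarith
    set k : ℕ := Nat.findGreatest P N with hk
    have hPk : P k := Nat.findGreatest_spec (Nat.zero_le N) hP0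
    have hPk1 : ¬ P (k + 1) := by
      by_cases h : k + 1 ≤ N
      · exact Nat.findGreatest_is_greatest (Nat.lt_succ_self k) h
      · exact hbig (k + 1) (by omega)
    refine ⟨-B + k * ε, hPk, ?_, hmem_le x _ hPk, ?_⟩
    · have := lt_of_not_ge hPk1
      have heq : ((-B + (k + 1 : ℕ) * ε : ℚ) : G) = ((-B + k * ε + ε : ℚ) : G) := by
        push_cast; ring
      rw [heq] at this
      exact le_of_lt this
    · have h1 : st x ≤ ((-B + k * ε + ε : ℚ) : ℝ) := by
        apply hle_st
        have := lt_of_not_ge hPk1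
        have heq : ((-B + (k + 1 : ℕ) * ε : ℚ) : G) = ((-B + k * ε + ε : ℚ) : G) := by
          push_cast; ring
        rw [heq] at this
        exact le_of_lt this
      push_cast at h1 ⊢
      linarith
  -- additivity
  have hadd : ∀ x y : R, st (x + y) = st x + st y := by
    intro x y
    have key : ∀ ε : ℚ, 0 < ε → |st (x + y) - (st x + st y)| ≤ 4 * (ε : ℝ) := by
      intro ε hε
      obtain ⟨q1, h1l, h1u, h1sl, h1su⟩ := happrox x ε hε
      obtain ⟨q2, h2l, h2u, h2sl, h2su⟩ := happrox y ε hε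
      have hxyl : (((q1 + q2 : ℚ)) : G) ≤ ((x + y : R) : G) := by
        push_cast
        exact add_le_add h1l h2l
      have hxyu : ((x + y : R) : G) ≤ (((q1 + q2 + 2 * ε : ℚ)) : G) := by
        push_cast
        push_cast at h1u h2u
        calc ((x : G) + (y : G)) ≤ ((q1 : G) + ε + ((q2 : G) + ε)) := add_le_add h1u h2u
          _ = (q1 : G) + (q2 : G) + 2 * (ε : G) := by ring
      have hsl := hmem_le (x + y) _ hxyl
      have hsu := hle_st (x + y) _ hxyu
      push_cast at hsl hsu
      rw [abs_le]
      constructor <;> linarith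
    have h0 : |st (x + y) - (st x + st y)| ≤ 0 := by
      by_contra h
      push_neg at h
      obtain ⟨ε, hε0, hεlt⟩ := exists_rat_btwn (by positivity :
        (0 : ℝ) < |st (x + y) - (st x + st y)| / 4)
      have hε : (0 : ℚ) < ε := by exact_mod_cast hε0
      have := key ε hε
      have : |st (x + y) - (st x + st y)| < |st (x + y) - (st x + st y)| := by
        calc |st (x + y) - (st x + st y)| ≤ 4 * (ε : ℝ) := this
          _ < 4 * (|st (x + y) - (st x + st y)| / 4) := by linarith
          _ = |st (x + y) - (st x + st y)| := by ring
      exact absurd this (lt_irrefl _)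
    have := abs_nonneg (st (x + y) - (st x + st y))
    have : st (x + y) - (st x + st y) = 0 := by
      rw [← abs_eq_zero]; linarith
    linarith
  -- multiplicativity
  have hmul : ∀ x y : R, st (x * y) = st x * st y := by
    intro x y
    obtain ⟨Bx, hBx, hxB⟩ := hbound x
    obtain ⟨By, hBy, hyB⟩ := hbound y
    set C : ℚ := max Bx By + 1 with hC
    have hC1 : (1 : ℚ) ≤ C := by
      have h : 0 < max Bx By := lt_of_lt_of_le hBx (le_max_left _ _)
      rw [hC]; linarith
    have hxC : |(x : G)| ≤ (C : G) := by
      refine le_trans hxB ((Rat.cast_le (K := G)).mpr ?_)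
      have := le_max_left Bx By
      rw [hC]; linarith
    have hyC : |(y : G)| ≤ (C : G) := by
      refine le_trans hyB ((Rat.cast_le (K := G)).mpr ?_)
      have := le_max_right Bx By
      rw [hC]; linarith
    have key : ∀ ε : ℚ, 0 < ε → ε ≤ 1 → |st (x * y) - st x * st y| ≤ 8 * (C:ℝ) * (ε : ℝ) := by
      intro ε hε hε1
      obtain ⟨q1, h1l, h1u, h1sl, h1su⟩ := happrox x ε hε
      obtain ⟨q2, h2l, h2u, h2sl, h2su⟩ := happrox y ε hε
      -- germ-level facts
      have hxu : (x : G) ≤ (C : G) := le_trans (le_abs_self _) hxC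
      have hxl : -(C : G) ≤ (x : G) := le_trans (neg_le_neg hxC) (neg_abs_le _)
      have hyu : (y : G) ≤ (C : G) := le_trans (le_abs_self _) hyC
      have hyl : -(C : G) ≤ (y : G) := le_trans (neg_le_neg hyC) (neg_abs_le _)
      have heG : (0 : G) < (ε : G) := by
        have := (Rat.cast_lt (K := G)).mpr hε; rwa [Rat.cast_zero] at this
      have he1G : (ε : G) ≤ (1 : G) := by
        have := (Rat.cast_le (K := G)).mpr hε1; rwa [Rat.cast_one] at this
      have hCG : (1 : G) ≤ (C : G) := by
        have := (Rat.cast_le (K := G)).mpr hC1; rwa [Rat.cast_one] at this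
      have h1u' : (x : G) ≤ (q1 : G) + (ε : G) := by push_cast at h1u; exact h1u
      have h2u' : (y : G) ≤ (q2 : G) + (ε : G) := by push_cast at h2u; exact h2u
      -- rational bounds on q1, q2
      have hq1u : q1 ≤ C := (Rat.cast_le (K := G)).mp (le_trans h1l hxu)
      have hq2u : q2 ≤ C := (Rat.cast_le (K := G)).mp (le_trans h2l hyu)
      have hq1d : -C - 1 ≤ q1 := by
        have : ((-C - 1 : ℚ) : G) ≤ (q1 : G) := by
          push_cast
          linarith [h1u', hxl, he1G]
        exact (Rat.cast_le (K := G)).mp this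
      have hq2d : -C - 1 ≤ q2 := by
        have : ((-C - 1 : ℚ) : G) ≤ (q2 : G) := by
          push_cast
          linarith [h2u', hyl, he1G]
        exact (Rat.cast_le (K := G)).mp this
      have hq1dG : -(C : G) - 1 ≤ (q1 : G) := by
        have := (Rat.cast_le (K := G)).mpr hq1d; push_cast at this; linarith
      have hq1uG : (q1 : G) ≤ (C : G) := (Rat.cast_le (K := G)).mpr hq1u
      have hq2uG : (q2 : G) ≤ (C : G) := (Rat.cast_le (K := G)).mpr hq2u
      -- germ bounds on the product
      have hGl : ((q1 * q2 - 4 * C * ε : ℚ) : G) ≤ ((x * y : R) : G) := by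
        push_cast
        nlinarith [mul_nonneg (sub_nonneg.mpr h1l) (sub_nonneg.mpr (neg_le_iff_add_nonneg.mp hyl)),
          mul_nonneg (show (0:G) ≤ (q1:G) + (C:G) + 1 by linarith)
            (sub_nonneg.mpr h2l),
          mul_nonneg (show (0:G) ≤ (C:G) by linarith)
            (show (0:G) ≤ (ε:G) - ((x:G) - (q1:G)) by linarith),
          mul_nonneg (show (0:G) ≤ (C:G) + 1 by linarith)
            (show (0:G) ≤ (ε:G) - ((y:G) - (q2:G)) by linarith)]
      have hGu : ((x * y : R) : G) ≤ ((q1 * q2 + 4 * C * ε : ℚ) : G) := by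
        push_cast
        nlinarith [mul_nonneg (sub_nonneg.mpr h1l) (sub_nonneg.mpr hyu),
          mul_nonneg (sub_nonneg.mpr (le_trans hq1uG (by linarith : (C:G) ≤ (C:G) + 1)))
            (sub_nonneg.mpr h2l),
          mul_nonneg (show (0:G) ≤ (C:G) by linarith)
            (show (0:G) ≤ (ε:G) - ((x:G) - (q1:G)) by linarith),
          mul_nonneg (show (0:G) ≤ (C:G) + 1 by linarith)
            (show (0:G) ≤ (ε:G) - ((y:G) - (q2:G)) by linarith)]
      have hsl := hmem_le (x * y) _ hGl
      have hsu := hle_st (x * y) _ hGu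
      push_cast at hsl hsu
      -- real-side bounds
      have hq1uR : (q1 : ℝ) ≤ (C : ℝ) := by exact_mod_cast hq1u
      have hq2uR : (q2 : ℝ) ≤ (C : ℝ) := by exact_mod_cast hq2u
      have hq1dR : -(C : ℝ) - 1 ≤ (q1 : ℝ) := by
        have : ((-C - 1 : ℚ) : ℝ) ≤ (q1 : ℝ) := by exact_mod_cast hq1d
        push_cast at this; linarith
      have hq2dR : -(C : ℝ) - 1 ≤ (q2 : ℝ) := by
        have : ((-C - 1 : ℚ) : ℝ) ≤ (q2 : ℝ) := by exact_mod_cast hq2d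
        push_cast at this; linarith
      have hεR : (0 : ℝ) < (ε : ℝ) := by exact_mod_cast hε
      have hε1R : (ε : ℝ) ≤ 1 := by exact_mod_cast hε1
      have hCR : (1 : ℝ) ≤ (C : ℝ) := by exact_mod_cast hC1
      rw [abs_le]
      constructor
      · nlinarith [mul_nonneg (sub_nonneg.mpr h1sl)
            (show (0:ℝ) ≤ st y + (C:ℝ) + 1 by nlinarith),
          mul_nonneg (show (0:ℝ) ≤ (q1:ℝ) + (C:ℝ) + 1 by linarith)
            (sub_nonneg.mpr h2sl),
          mul_nonneg (show (0:ℝ) ≤ (C:ℝ) + 1 by linarith)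
            (show (0:ℝ) ≤ (ε:ℝ) - (st x - (q1:ℝ)) by linarith),
          mul_nonneg (show (0:ℝ) ≤ (C:ℝ) + 1 by linarith)
            (show (0:ℝ) ≤ (ε:ℝ) - (st y - (q2:ℝ)) by linarith)]
      · nlinarith [mul_nonneg (sub_nonneg.mpr h1sl)
            (show (0:ℝ) ≤ (C:ℝ) + 1 - st y by nlinarith),
          mul_nonneg (show (0:ℝ) ≤ (C:ℝ) + 1 - (q1:ℝ) by linarith)
            (sub_nonneg.mpr h2sl),
          mul_nonneg (show (0:ℝ) ≤ (C:ℝ) + 1 by linarith)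
            (show (0:ℝ) ≤ (ε:ℝ) - (st x - (q1:ℝ)) by linarith),
          mul_nonneg (show (0:ℝ) ≤ (C:ℝ) + 1 by linarith)
            (show (0:ℝ) ≤ (ε:ℝ) - (st y - (q2:ℝ)) by linarith)]
    -- conclude
    have hCR : (1 : ℝ) ≤ (C : ℝ) := by exact_mod_cast hC1
    have h0 : |st (x * y) - st x * st y| ≤ 0 := by
      by_contra h
      push_neg at h
      set d := |st (x * y) - st x * st y| with hd
      have hδ : (0 : ℝ) < min 1 (d / (8 * (C:ℝ))) := by
        apply lt_min one_pos
        positivity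
      obtain ⟨ε, hε0, hεlt⟩ := exists_rat_btwn hδ
      have hε : (0 : ℚ) < ε := by exact_mod_cast hε0
      have hε1 : ε ≤ 1 := by
        have : (ε : ℝ) < 1 := lt_of_lt_of_le hεlt (min_le_left _ _)
        exact_mod_cast this.le
      have h2 : (ε : ℝ) < d / (8 * (C:ℝ)) := lt_of_lt_of_le hεlt (min_le_right _ _)
      have := key ε hε hε1
      have h3 : 8 * (C:ℝ) * (ε : ℝ) < d := by
        rw [lt_div_iff₀ (by linarith)] at h2
        linarith
      linarith
    have := abs_nonneg (st (x * y) - st x * st y)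
    have heq : st (x * y) - st x * st y = 0 := by rw [← abs_eq_zero]; linarith
    linarith
  have h1G : ((1 : ℚ) : G) ≤ ((1 : R) : G) := le_of_eq (by push_cast; ring)
  have h1G' : ((1 : R) : G) ≤ ((1 : ℚ) : G) := le_of_eq (by push_cast; ring)
  have hone : st 1 = 1 := by
    have ha := hmem_le 1 1 h1G
    have hb := hle_st 1 1 h1G'
    push_cast at ha hb
    linarith
  have h0G : ((0 : ℚ) : G) ≤ ((0 : R) : G) := le_of_eq (by push_cast; ring)
  have h0G' : ((0 : R) : G) ≤ ((0 : ℚ) : G) := le_of_eq (by push_cast; ring)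
  have hzero : st 0 = 0 := by
    have ha := hmem_le 0 0 h0G
    have hb := hle_st 0 0 h0G'
    push_cast at ha hb
    linarith
  set φ : R →+* ℝ :=
    { toFun := st, map_one' := hone, map_mul' := hmul, map_zero' := hzero,
      map_add' := hadd } with hφ
  have hcof : (F : Filter ℕ) ≤ cofinite := by
    rw [Filter.le_cofinite_iff_compl_singleton_mem]
    intro n
    exact Ultrafilter.compl_mem_iff_notMem.mpr (hnp n)
  have hsurj : Function.Surjective φ := by
    intro r
    choose f hf using fun n : ℕ =>
      exists_rat_near r (show (0:ℝ) < 1 / (n + 1) by positivity)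
    obtain ⟨Q, hQ⟩ := exists_rat_gt (|r| + 1)
    have hQR : |r| + 1 < (Q : ℝ) := hQ
    have hQ0 : (0 : ℚ) < Q := by
      have h1 : (0:ℝ) < (Q:ℝ) := lt_of_le_of_lt (by positivity) hQR
      exact_mod_cast h1
    set x : G := ((f : ℕ → ℚ) : G) with hx
    have hfbound : ∀ n, |f n| ≤ Q := by
      intro n
      have h1 : |r - (f n : ℝ)| < 1 / (n + 1) := hf n
      have h2 : (1 : ℝ) / (n + 1) ≤ 1 := by
        rw [div_le_one (by positivity)]
        have : (0:ℝ) ≤ (n:ℝ) := Nat.cast_nonneg n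
        linarith
      have h3 : |(f n : ℝ)| ≤ |r| + 1 := by
        have := abs_sub_abs_le_abs_sub (f n : ℝ) r
        rw [abs_sub_comm] at h1
        linarith
      have h4 : |(f n : ℝ)| ≤ (Q : ℝ) := by linarith
      have h5 : ((|f n| : ℚ) : ℝ) ≤ ((Q : ℚ) : ℝ) := by push_cast; exact h4
      exact_mod_cast h5
    have hxmem : x ∈ R := by
      rw [← SetLike.mem_coe, hR]
      refine ⟨Q, hQ0, ?_⟩
      show |x| ≤ (Q : G)
      rw [hx, Filter.Germ.abs_def, Filter.Germ.map_coe, germ_ratCast_eq]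
      exact Filter.Germ.coe_le.mpr (Eventually.of_forall hfbound)
    -- key approximation facts
    have keylt : ∀ p : ℚ, (p : ℝ) < r → x > (p : G) := by
      intro p hp
      obtain ⟨N, hN⟩ := exists_nat_one_div_lt (show (0:ℝ) < r - p by linarith)
      have hev : ∀ᶠ n in (F : Filter ℕ), p < f n := by
        refine Eventually.filter_mono hcof (Filter.eventually_cofinite.mpr ?_)
        refine Set.Finite.subset (Set.finite_Iio N) ?_
        intro n hn
        simp only [Set.mem_setOf_eq, not_lt] at hn
        show n < N
        by_contra hc
        push_neg at hc
        have h1 : |r - (f n : ℝ)| < 1 / (n + 1) := hf n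
        have h2 : (f n : ℝ) ≤ (p : ℝ) := by exact_mod_cast hn
        have h3 : r - (p:ℝ) ≤ r - (f n : ℝ) := by linarith
        have h4 : r - (f n : ℝ) ≤ |r - (f n : ℝ)| := le_abs_self _
        have h5 : (1:ℝ) / (n + 1) ≤ 1 / (N + 1) := by
          apply one_div_le_one_div_of_le (by positivity)
          have : (N:ℝ) ≤ n := by exact_mod_cast hc
          linarith
        linarith
      rw [hx, germ_ratCast_eq]
      exact Filter.Germ.coe_lt.mpr hev
    have keygt : ∀ p : ℚ, r < (p : ℝ) → x < (p : G) := by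
      intro p hp
      obtain ⟨N, hN⟩ := exists_nat_one_div_lt (show (0:ℝ) < (p:ℝ) - r by linarith)
      have hev : ∀ᶠ n in (F : Filter ℕ), f n < p := by
        refine Eventually.filter_mono hcof (Filter.eventually_cofinite.mpr ?_)
        refine Set.Finite.subset (Set.finite_Iio N) ?_
        intro n hn
        simp only [Set.mem_setOf_eq, not_lt] at hn
        show n < N
        by_contra hc
        push_neg at hc
        have h1 : |r - (f n : ℝ)| < 1 / (n + 1) := hf n
        have h2 : (p : ℝ) ≤ (f n : ℝ) := by exact_mod_cast hn
        have h3 : (p:ℝ) - r ≤ (f n : ℝ) - r := by linarith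
        have h4 : (f n : ℝ) - r ≤ |r - (f n : ℝ)| := by
          rw [abs_sub_comm]; exact le_abs_self _
        have h5 : (1:ℝ) / (n + 1) ≤ 1 / (N + 1) := by
          apply one_div_le_one_div_of_le (by positivity)
          have : (N:ℝ) ≤ n := by exact_mod_cast hc
          linarith
        linarith
      rw [hx, germ_ratCast_eq]
      exact Filter.Germ.coe_lt.mpr hev
    refine ⟨⟨x, hxmem⟩, ?_⟩
    show st ⟨x, hxmem⟩ = r
    apply le_antisymm
    · refine csSup_le (hSne _) ?_
      rintro s ⟨p, hp, rfl⟩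
      by_contra hc
      push_neg at hc
      have h1 : x < (p : G) := keygt p hc
      exact absurd (lt_of_le_of_lt hp h1) (lt_irrefl _)
    · by_contra hc
      push_neg at hc
      obtain ⟨p, hp1, hp2⟩ := exists_rat_btwn hc
      have h1 : (p : G) < x := keylt p hp2
      have h2 := hmem_le ⟨x, hxmem⟩ p (le_of_lt h1)
      exact absurd (lt_of_le_of_lt h2 hp1) (lt_irrefl _)
  have hker : I = RingHom.ker φ := by
    ext y
    rw [hI y, RingHom.mem_ker]
    show _ ↔ st y = 0
    constructor
    · intro h
      have hb : ∀ q : ℚ, 0 < q → -(q:ℝ) ≤ st y ∧ st y ≤ (q:ℝ) := by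
        intro q hq
        have habs := h q hq
        have h1 : (y : G) ≤ (q : G) := le_of_lt (lt_of_le_of_lt (le_abs_self _) habs)
        have h2 : ((-q : ℚ) : G) ≤ (y : G) := by
          push_cast
          have h3 := neg_abs_le (y : G)
          have h4 := neg_lt_neg habs
          linarith
        have h5 := hmem_le y (-q) h2
        have h6 := hle_st y q h1
        push_cast at h5
        exact ⟨h5, h6⟩
      by_contra hne
      have hpos : 0 < |st y| := abs_pos.mpr hne
      obtain ⟨q, hq0, hqlt⟩ := exists_rat_btwn hpos
      have hq : (0:ℚ) < q := by exact_mod_cast hq0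
      obtain ⟨hl, hu⟩ := hb q hq
      have : |st y| ≤ (q:ℝ) := abs_le.mpr ⟨hl, hu⟩
      linarith
    · intro h q hq
      rw [abs_lt]
      constructor
      · by_contra hc
        push_neg at hc
        have h2 : (y : G) ≤ ((-q : ℚ) : G) := by push_cast; exact hc
        have h3 := hle_st y (-q) h2
        rw [h] at h3
        push_cast at h3
        have : (0:ℝ) < (q:ℝ) := by exact_mod_cast hq
        linarith
      · by_contra hc
        push_neg at hc
        have h3 := hmem_le y q hc
        rw [h] at h3
        have : (0:ℝ) < (q:ℝ) := by exact_mod_cast hq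
        linarith
  exact ⟨(Ideal.quotEquivOfEq hker).trans (RingHom.quotientKerEquivOfSurjective hsurj)⟩
end

section
/- Let F be a non-principal ultrafilter on ℕ and (x_n) a sequence of pairwise-distinct-on-a-big-set rationals bounded on some set in F (i.e., {n | k < x_n ≤ k+1} ∈ F for some integer k). If F is selective and x is the class of (x_n) with x_n < x for all n in a set E ∈ F, then there exists B ⊆ E, B ∈ F, such that for the partition J_s = {i ∈ E | x − 1/s ≤ x_i < x − 1/(s+1)}, each J_s ∉ F and B meets each J_s in at most one point; consequently (x_n)_{n∈B} is Cauchy. -/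
open Filter Set

/-- If `F` is selective, `(x_n)` is injective on a big set, bounded on a big
set, and `x_n < x` (in `ℚ*`) for all `n` in some big set `E`, then there is a big
`B ⊆ E` meeting each piece `J_s = {i ∈ E | x - 1/s ≤ x_i < x - 1/(s+1)}` (each of which
is small) in at most one point; consequently the subsequence of `(x_n)` along `B` is
Cauchy. -/
theorem small_partition_selection_gives_cauchy
    (F : Ultrafilter ℕ) (hnp : ∀ n : ℕ, {n} ∉ F)
    (hsel : ∀ f : ℕ → ℕ, (∀ i, f ⁻¹' {i} ∉ F) → ∃ B ∈ F, Set.InjOn f B)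
    (x : ℕ → ℚ)
    (hdist : ∃ D ∈ F, Set.InjOn x D)
    (hbdd : ∃ k : ℤ, {n : ℕ | (k : ℚ) < x n ∧ x n ≤ (k : ℚ) + 1} ∈ F)
    (E : Set ℕ) (hE : E ∈ F)
    (hlt : ∀ n ∈ E, ((x n : ℚ) : Germ (F : Filter ℕ) ℚ) < (x : Germ (F : Filter ℕ) ℚ)) :
    ∃ B ⊆ E, B ∈ F ∧
      (∀ s : ℕ, 1 ≤ s →
        {i ∈ E | (x : Germ (F : Filter ℕ) ℚ) - ((1 / (s : ℚ)) : ℚ) ≤ ((x i : ℚ) : Germ (F : Filter ℕ) ℚ) ∧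
          ((x i : ℚ) : Germ (F : Filter ℕ) ℚ) < (x : Germ (F : Filter ℕ) ℚ) - ((1 / ((s : ℚ) + 1)) : ℚ)} ∉ F) ∧
      (∀ s : ℕ, 1 ≤ s →
        (B ∩ {i ∈ E | (x : Germ (F : Filter ℕ) ℚ) - ((1 / (s : ℚ)) : ℚ) ≤ ((x i : ℚ) : Germ (F : Filter ℕ) ℚ) ∧
          ((x i : ℚ) : Germ (F : Filter ℕ) ℚ) < (x : Germ (F : Filter ℕ) ℚ) - ((1 / ((s : ℚ) + 1)) : ℚ)}).Subsingleton) ∧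
      (∀ e : ℕ → ℕ, StrictMono e → Set.range e = B → IsCauSeq abs (fun k => x (e k))) := by
  classical
  obtain ⟨D, hD, hinjD⟩ := hdist
  obtain ⟨k, hK⟩ := hbdd
  set K : Set ℕ := {n : ℕ | (k : ℚ) < x n ∧ x n ≤ (k : ℚ) + 1} with hKdef
  -- constants embed as constant germs
  have hconst : ∀ q : ℚ, ((q : ℚ) : Germ (F : Filter ℕ) ℚ)
      = ((fun _ => q : ℕ → ℚ) : Germ (F : Filter ℕ) ℚ) :=
    fun q => (eq_ratCast ((Germ.coeRingHom (F : Filter ℕ)).comp (Pi.constRingHom ℕ ℚ)) q).symm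
  have hsub : ∀ c : ℚ, (x : Germ (F : Filter ℕ) ℚ) - ((c : ℚ) : Germ (F : Filter ℕ) ℚ)
      = ((fun m => x m - c : ℕ → ℚ) : Germ (F : Filter ℕ) ℚ) := fun c => by
    rw [hconst]; exact (Germ.coe_sub x _).symm
  have hlt' : ∀ n ∈ E, ∀ᶠ m in (F : Filter ℕ), x n < x m := by
    intro n hn
    have h := hlt n hn
    rw [hconst] at h
    exact Germ.coe_lt.mp h
  -- the pieces J s
  set J : ℕ → Set ℕ := fun s =>
    {i ∈ E | (x : Germ (F : Filter ℕ) ℚ) - ((1 / (s : ℚ)) : ℚ) ≤ ((x i : ℚ) : Germ (F : Filter ℕ) ℚ) ∧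
      ((x i : ℚ) : Germ (F : Filter ℕ) ℚ) < (x : Germ (F : Filter ℕ) ℚ) - ((1 / ((s : ℚ) + 1)) : ℚ)}
    with hJdef
  have hJmem : ∀ s i, i ∈ J s ↔ i ∈ E ∧ (∀ᶠ m in (F : Filter ℕ), x m - 1/(s:ℚ) ≤ x i)
      ∧ (∀ᶠ m in (F : Filter ℕ), x i < x m - 1/((s:ℚ)+1)) := by
    intro s i
    rw [hJdef]
    simp only [mem_sep_iff]
    rw [hsub (1/(s:ℚ)), hsub (1/((s:ℚ)+1)), hconst (x i)]
    exact and_congr Iff.rfl (and_congr Germ.coe_le Germ.coe_lt)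
  -- each J s is small
  have hJnotF : ∀ s : ℕ, 1 ≤ s → J s ∉ F := by
    intro s _ hmemF
    have hSK : J s ∩ K ∈ F := inter_mem hmemF hK
    obtain ⟨i0, hi0⟩ := Filter.nonempty_of_mem (show J s ∩ K ∈ (F : Filter ℕ) from hSK)
    have chain : ∀ m : ℕ, ∃ i ∈ J s ∩ K, x i0 + (m:ℚ) * (1/((s:ℚ)+1)) ≤ x i := by
      intro m
      induction m with
      | zero => exact ⟨i0, hi0, by norm_num⟩
      | succ m ih =>
        obtain ⟨i, hi, hxi⟩ := ih
        have h1 : ∀ᶠ m' in (F : Filter ℕ), x i < x m' - 1/((s:ℚ)+1) := ((hJmem s i).mp hi.1).2.2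
        have h2 : ∀ᶠ m' in (F : Filter ℕ), m' ∈ J s ∩ K := eventually_mem_set.mpr hSK
        obtain ⟨j, hj1, hj2⟩ := (h1.and h2).exists
        refine ⟨j, hj2, ?_⟩
        push_cast
        push_cast at hxi
        linarith
    obtain ⟨m, hm⟩ := exists_nat_gt ((s:ℚ)+1)
    obtain ⟨i, hi, hxi⟩ := chain m
    have h1 : (k:ℚ) < x i0 := hi0.2.1
    have h2 : x i ≤ (k:ℚ)+1 := hi.2.2
    have h3 : (1:ℚ) < (m:ℚ) * (1/((s:ℚ)+1)) := by
      rw [mul_one_div]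
      exact (one_lt_div (by positivity)).mpr hm
    linarith
  -- the pieces are pairwise disjoint
  have hdisj : ∀ i s t, i ∈ J s → i ∈ J t → s = t := by
    have key : ∀ s t i, s < t → i ∈ J s → i ∈ J t → False := by
      intro s t i hst his hit
      have h1 := ((hJmem s i).mp his).2.2
      have h2 := ((hJmem t i).mp hit).2.1
      obtain ⟨m, hm1, hm2⟩ := (h1.and h2).exists
      have hle : ((s:ℚ)+1) ≤ (t:ℚ) := by
        have : s + 1 ≤ t := hst
        exact_mod_cast this
      have h3 : 1/((t:ℚ)) ≤ 1/((s:ℚ)+1) :=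
        one_div_le_one_div_of_le (by positivity) hle
      linarith
    intro i s t his hit
    rcases lt_trichotomy s t with h | h | h
    · exact absurd (key s t i h his hit) not_false
    · exact h
    · exact absurd (key t s i h hit his) not_false
  -- the selection function
  set f : ℕ → ℕ := fun i => if h : ∃ s, 1 ≤ s ∧ i ∈ J s then h.choose else 0 with hfdef
  have hf_spec : ∀ i s, 1 ≤ s → i ∈ J s → f i = s := by
    intro i s hs his
    have hex : ∃ u, 1 ≤ u ∧ i ∈ J u := ⟨s, hs, his⟩
    have h1 : f i = hex.choose := by simp only [hfdef]; rw [dif_pos hex]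
    rw [h1]
    exact hdisj i hex.choose s hex.choose_spec.2 his
  have hf0 : ∀ i, f i = 0 → ¬ ∃ s, 1 ≤ s ∧ i ∈ J s := by
    intro i h0 hex
    have := hf_spec i hex.choose hex.choose_spec.1 hex.choose_spec.2
    have := hex.choose_spec.1
    omega
  have hfmem : ∀ i, 1 ≤ f i → i ∈ J (f i) := by
    intro i h1
    by_cases hex : ∃ s, 1 ≤ s ∧ i ∈ J s
    · have h2 : f i = hex.choose := by simp only [hfdef]; rw [dif_pos hex]
      rw [h2]; exact hex.choose_spec.2
    · have h2 : f i = 0 := by simp only [hfdef]; rw [dif_neg hex]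
      omega
  -- indices in E ∩ K with f i = 0 are "infinitely close to x from below"
  have hfull : ∀ i, i ∈ E → i ∈ K → f i = 0 →
      ∀ s : ℕ, 1 ≤ s → ∀ᶠ m in (F : Filter ℕ), x m - 1/(s:ℚ) ≤ x i := by
    intro i hiE hiK h0
    by_contra hcon
    push_neg at hcon
    obtain ⟨s, hs, hnot⟩ := hcon
    have hP1 : ∀ᶠ m in (F : Filter ℕ), x m - 1/(((1:ℕ)):ℚ) ≤ x i := by
      refine (eventually_mem_set.mpr (show K ∈ (F : Filter ℕ) from hK)).mono (fun m hm => ?_)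
      have h1 : x m ≤ (k:ℚ) + 1 := hm.2
      have h2 : (k:ℚ) < x i := hiK.1
      push_cast
      linarith
    set Q : ℕ → Prop := fun u => ¬ ∀ᶠ m in (F : Filter ℕ), x m - 1/(u:ℚ) ≤ x i with hQdef
    have hnQ1 : ¬ Q 1 := fun h => h hP1
    have hs2 : 2 ≤ s := by
      rcases Nat.lt_or_ge s 2 with h | h
      · exfalso
        have : s = 1 := by omega
        rw [this] at hnot
        obtain ⟨m, hm1, hm2⟩ := (hnot.and hP1).exists
        linarith
      · exact h
    have hexQ' : ∃ u, Q (u + 2) := by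
      refine ⟨s - 2, ?_⟩
      rw [show s - 2 + 2 = s from by omega]
      intro hh
      obtain ⟨m, hm1, hm2⟩ := (hnot.and hh).exists
      linarith
    set m₀ : ℕ := Nat.find hexQ' with hm₀def
    have hQm₀ : Q (m₀ + 2) := Nat.find_spec hexQ'
    have hLos' : ¬ Q (m₀ + 1) := by
      rcases Nat.eq_zero_or_pos m₀ with h0' | hp
      · rw [h0']; exact hnQ1
      · have hmin := Nat.find_min hexQ' (show m₀ - 1 < m₀ from by omega)
        rwa [show m₀ - 1 + 2 = m₀ + 1 from by omega] at hmin
    have hLo : ∀ᶠ m in (F : Filter ℕ), x m - 1/(((m₀+1:ℕ)):ℚ) ≤ x i := not_not.mp hLos'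
    have hHi : ∀ᶠ m in (F : Filter ℕ), x i < x m - 1/((((m₀+1:ℕ)):ℚ)+1) := by
      have h := (Ultrafilter.eventually_not (f := F)).mpr hQm₀
      refine h.mono (fun m hm => ?_)
      have heq : (((m₀+1:ℕ)):ℚ)+1 = (((m₀+2:ℕ)):ℚ) := by push_cast; ring
      rw [heq]
      exact not_le.mp hm
    exact hf0 i h0 ⟨m₀ + 1, by omega, (hJmem (m₀+1) i).mpr ⟨hiE, hLo, hHi⟩⟩
  -- all fibers of f are small
  have hpre : ∀ t : ℕ, f ⁻¹' {t} ∉ F := by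
    intro t ht
    rcases Nat.eq_zero_or_pos t with rfl | hpos
    · have hS : f ⁻¹' {0} ∩ (E ∩ (K ∩ D)) ∈ F := inter_mem ht (inter_mem hE (inter_mem hK hD))
      obtain ⟨i, hi⟩ := Filter.nonempty_of_mem (show _ ∈ (F : Filter ℕ) from hS)
      have hS2 : (f ⁻¹' {0} ∩ (E ∩ (K ∩ D))) ∩ {i}ᶜ ∈ F :=
        inter_mem hS ((Ultrafilter.compl_mem_iff_notMem).mpr (hnp i))
      obtain ⟨j, hj⟩ := Filter.nonempty_of_mem (show _ ∈ (F : Filter ℕ) from hS2)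
      have hij : j ≠ i := hj.2
      have hxi : x i ≠ x j := fun hxeq => hij.symm (hinjD hi.2.2.2 hj.1.2.2.2 hxeq)
      have hfi := hfull i hi.2.1 hi.2.2.1 hi.1
      have hfj := hfull j hj.1.2.1 hj.1.2.2.1 hj.1.1
      -- helper : two E-points, lower one infinitely close, gives contradiction
      have hinf : ∀ a ∈ E, ∀ b ∈ E,
          (∀ s : ℕ, 1 ≤ s → ∀ᶠ m in (F : Filter ℕ), x m - 1/(s:ℚ) ≤ x a) →
          x a < x b → False := by
        intro a haE b hbE hLoa hab
        obtain ⟨s, hsgt⟩ := exists_nat_gt (1/(x b - x a))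
        have hd : (0:ℚ) < x b - x a := by linarith
        have ht0 : (0:ℚ) < (s:ℚ)+1 := by positivity
        have h5 := (div_lt_iff₀ hd).mp hsgt
        have h4 : 1/((s:ℚ)+1) < x b - x a := by
          rw [div_lt_iff₀ ht0]; nlinarith
        have h6 := hLoa (s+1) (by omega)
        have h7 := hlt' b hbE
        obtain ⟨m, hm1, hm2⟩ := (h6.and h7).exists
        have heq : 1/(((s+1:ℕ)):ℚ) = 1/((s:ℚ)+1) := by push_cast; ring
        rw [heq] at hm1
        linarith
      rcases lt_trichotomy (x i) (x j) with h | h | h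
      · exact hinf i hi.2.1 j hj.1.2.1 hfi h
      · exact hxi h
      · exact hinf j hj.1.2.1 i hi.2.1 hfj h
    · have hsub2 : f ⁻¹' {t} ⊆ J t := by
        intro i hi
        have hit : f i = t := hi
        have := hfmem i (by omega)
        rwa [hit] at this
      exact hJnotF t hpos (Filter.mem_of_superset ht hsub2)
  -- select
  obtain ⟨B0, hB0F, hB0inj⟩ := hsel f hpre
  refine ⟨B0 ∩ (E ∩ (K ∩ D)), fun i hi => hi.2.1,
    inter_mem hB0F (inter_mem hE (inter_mem hK hD)), fun s hs => hJnotF s hs, ?_, ?_⟩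
  · intro s hs i hi j hj
    have hfi : f i = s := hf_spec i s hs hi.2
    have hfj : f j = s := hf_spec j s hs hj.2
    exact hB0inj hi.1.1 hj.1.1 (by rw [hfi, hfj])
  · intro e he hrange ε hε
    obtain ⟨t, htgt⟩ := exists_nat_gt (1/ε)
    have htpos : (0:ℚ) < (t:ℚ) := lt_trans (by positivity) htgt
    have ht1 : 1 ≤ t := by
      have : 0 < t := by exact_mod_cast htpos
      omega
    have hεt : 1/(t:ℚ) < ε := by
      rw [div_lt_iff₀ htpos]
      have := (div_lt_iff₀ hε).mp htgt
      linarith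
    set B : Set ℕ := B0 ∩ (E ∩ (K ∩ D)) with hBdef
    -- "bad" points: those not t-close to x from below
    set Bad : Set ℕ := {i ∈ B | ¬ ∀ᶠ m in (F : Filter ℕ), x m - 1/(t:ℚ) ≤ x i} with hBaddef
    have hgood : ∀ i ∈ Bad, 1 ≤ f i ∧ f i ≤ t := by
      intro i hi
      obtain ⟨hiB, hbad⟩ := hi
      rcases Nat.eq_zero_or_pos (f i) with h0 | h1
      · exact absurd (hfull i hiB.2.1 hiB.2.2.1 h0 t ht1) hbad
      · refine ⟨h1, ?_⟩
        by_contra hge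
        push_neg at hge
        have hJ' := hfmem i h1
        have hLo := ((hJmem (f i) i).mp hJ').2.1
        apply hbad
        refine hLo.mono (fun m hm => ?_)
        have hcast : (t:ℚ) ≤ ((f i : ℕ):ℚ) := by exact_mod_cast le_of_lt hge
        have := one_div_le_one_div_of_le htpos hcast
        linarith
    have hBadfin : Bad.Finite := by
      apply Set.Finite.of_finite_image (f := f)
      · apply Set.Finite.subset (Set.finite_Icc 1 t)
        rintro _ ⟨i, hi, rfl⟩
        exact mem_Icc.mpr (hgood i hi)
      · exact hB0inj.mono (fun i hi => hi.1.1)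
    have hprefin : (e ⁻¹' Bad).Finite := hBadfin.preimage (he.injective.injOn)
    obtain ⟨N, hN⟩ := hprefin.bddAbove
    refine ⟨N + 1, fun j hj => ?_⟩
    have hmemB : ∀ u : ℕ, e u ∈ B := by
      intro u
      rw [← hrange] at *
      exact ⟨u, rfl⟩
    have hnotbad : ∀ u : ℕ, N + 1 ≤ u → ∀ᶠ m in (F : Filter ℕ), x m - 1/(t:ℚ) ≤ x (e u) := by
      intro u hu
      by_contra hb
      have : u ∈ e ⁻¹' Bad := ⟨hmemB u, hb⟩
      have := hN this
      omega
    have h1 := hnotbad j hj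
    have h2 := hnotbad (N+1) le_rfl
    have h3 := hlt' (e j) (hmemB j).2.1
    have h4 := hlt' (e (N+1)) (hmemB (N+1)).2.1
    obtain ⟨m, ⟨hm1, hm2⟩, hm3, hm4⟩ := ((h1.and h2).and (h3.and h4)).exists
    show |x (e j) - x (e (N+1))| < ε
    rw [abs_sub_lt_iff]
    constructor <;> linarith
end
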